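/- arXiv:1805.03847 — 11 statements merged into one kernel-verified Lean document; each statement's English description precedes it below -/
import Mathlib

section
/- Let Γ ⊆ ℝⁿ be open and convex, S ⊆ Γ convex, f : Γ → ℝ differentiable and quasiconvex on Γ, and let S̄ = argmin{f(x) | x ∈ S} be nonempty. If x, y ∈ S̄ with ∇f(x) ≠ 0 and ∇f(y) ≠ 0, then for any d ∈ ℝⁿ, ⟨∇f(x), d⟩ < 0 implies ⟨∇f(y), d⟩ ≤ 0. -/
open Filter Topology

lemma dirDeriv {n : ℕ} {f : EuclideanSpace ℝ (Fin n) → ℝ} {v : EuclideanSpace ℝ (Fin n)}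
    (hf : DifferentiableAt ℝ f v) (w : EuclideanSpace ℝ (Fin n)) :
    HasDerivAt (fun t : ℝ => f (v + t • w)) (inner ℝ (gradient f v) w : ℝ) 0 := by
  have hF : HasFDerivAt f ((InnerProductSpace.toDual ℝ _) (gradient f v))
      ((fun t : ℝ => v + t • w) 0) := by
    simpa using hasGradientAt_iff_hasFDerivAt.mp hf.hasGradientAt
  have hline : HasDerivAt (fun t : ℝ => v + t • w) w 0 := by
    simpa using ((hasDerivAt_id (0:ℝ)).smul_const w).const_add v
  have := hF.comp_hasDerivAt (0:ℝ) hline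
  convert this using 1
  all_goals rfl

lemma derivNonpos {g : ℝ → ℝ} {c : ℝ} (hg : HasDerivAt g c 0)
    (h : ∀ᶠ t in 𝓝[>] (0:ℝ), g t ≤ g 0) : c ≤ 0 := by
  have hs : Tendsto (slope g 0) (𝓝[>] (0:ℝ)) (𝓝 c) :=
    (hasDerivAt_iff_tendsto_slope.mp hg).mono_left
      (nhdsWithin_mono _ (fun t ht => ne_of_gt ht))
  refine le_of_tendsto hs ?_
  filter_upwards [h, self_mem_nhdsWithin] with t ht ht0
  rw [slope_def_field]
  apply div_nonpos_of_nonpos_of_nonneg (sub_nonpos.mpr ht)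
  simp only [sub_zero]
  exact le_of_lt ht0

lemma derivZero {g : ℝ → ℝ} {c : ℝ} (hg : HasDerivAt g c 0)
    (h : ∀ᶠ t in 𝓝[>] (0:ℝ), g t = g 0) : c = 0 := by
  have hs : Tendsto (slope g 0) (𝓝[>] (0:ℝ)) (𝓝 c) :=
    (hasDerivAt_iff_tendsto_slope.mp hg).mono_left
      (nhdsWithin_mono _ (fun t ht => ne_of_gt ht))
  have hs0 : Tendsto (slope g 0) (𝓝[>] (0:ℝ)) (𝓝 0) := by
    apply Tendsto.congr' _ tendsto_const_nhds
    filter_upwards [h] with t ht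
    rw [slope_def_field, ht, sub_self, zero_div]
  exact tendsto_nhds_unique hs hs0

theorem stmt_3 {n : ℕ} (Γ S : Set (EuclideanSpace ℝ (Fin n)))
    (hΓo : IsOpen Γ) (hΓ : Convex ℝ Γ) (hS : Convex ℝ S) (hSΓ : S ⊆ Γ)
    (f : EuclideanSpace ℝ (Fin n) → ℝ)
    (hdiff : ∀ z ∈ Γ, DifferentiableAt ℝ f z)
    (hqc : ∀ x ∈ Γ, ∀ y ∈ Γ, ∀ t ∈ Set.Icc (0:ℝ) 1,
        f (x + t • (y - x)) ≤ max (f x) (f y))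
    (Sbar : Set (EuclideanSpace ℝ (Fin n)))
    (hSbar : Sbar = {x ∈ S | ∀ y ∈ S, f x ≤ f y})
    (hne : Sbar.Nonempty)
    (x : EuclideanSpace ℝ (Fin n)) (hx : x ∈ Sbar)
    (y : EuclideanSpace ℝ (Fin n)) (hy : y ∈ Sbar)
    (hgx : gradient f x ≠ 0) (hgy : gradient f y ≠ 0)
    (d : EuclideanSpace ℝ (Fin n))
    (hd : (inner ℝ (gradient f x) d : ℝ) < 0) :
    (inner ℝ (gradient f y) d : ℝ) ≤ 0 := by
  subst hSbar
  obtain ⟨hxS, hxmin⟩ := hx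
  obtain ⟨hyS, hymin⟩ := hy
  have hxΓ := hSΓ hxS
  have hyΓ := hSΓ hyS
  have hfxy : f x = f y := le_antisymm (hxmin y hyS) (hymin x hxS)
  -- f is constant on the segment from y to x
  have hconst : ∀ t ∈ Set.Icc (0:ℝ) 1, f (y + t • (x - y)) = f y := by
    intro t ht
    have hmem : y + t • (x - y) ∈ S := by
      have := hS hyS hxS (sub_nonneg.mpr ht.2) ht.1 (by ring)
      convert this using 1
      module
    have h1 := hqc y hyΓ x hxΓ t ht
    rw [hfxy, max_self] at h1
    exact le_antisymm h1 (hymin _ hmem)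
  -- ⟨∇f(y), x - y⟩ = 0
  have hYxy : (inner ℝ (gradient f y) (x - y) : ℝ) = 0 := by
    apply derivZero (dirDeriv (hdiff y hyΓ) (x - y))
    filter_upwards [Ioo_mem_nhdsGT_of_mem (by simp : (0:ℝ) ∈ Set.Ico (0:ℝ) 1)] with t ht
    rw [hconst t ⟨ht.1.le, ht.2.le⟩]
    simp [hconst 0 (by norm_num)]
  -- find t > 0 with f (x + t • d) < f x and x + t • d ∈ Γ
  have hsX : Tendsto (slope (fun s : ℝ => f (x + s • d)) 0) (𝓝[>] (0:ℝ)) (𝓝 (inner ℝ (gradient f x) d : ℝ)) :=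
    (hasDerivAt_iff_tendsto_slope.mp (dirDeriv (hdiff x hxΓ) d)).mono_left
      (nhdsWithin_mono _ (fun t ht => ne_of_gt ht))
  have ev1 : ∀ᶠ t in 𝓝[>] (0:ℝ), slope (fun s : ℝ => f (x + s • d)) 0 t < 0 :=
    hsX.eventually (Iio_mem_nhds hd)
  have ev2 : ∀ᶠ t in 𝓝[>] (0:ℝ), x + t • d ∈ Γ := by
    have hcont : Tendsto (fun t : ℝ => x + t • d) (𝓝[>] (0:ℝ)) (𝓝 x) := by
      have : Tendsto (fun t : ℝ => x + t • d) (𝓝 (0:ℝ)) (𝓝 (x + (0:ℝ) • d)) :=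
        (continuous_const.add (continuous_id.smul continuous_const)).tendsto 0
      simpa using this.mono_left nhdsWithin_le_nhds
    exact hcont (hΓo.mem_nhds hxΓ)
  obtain ⟨t, ⟨hslope, hmemΓ⟩, ht0⟩ := ((ev1.and ev2).and self_mem_nhdsWithin).exists
  have ht0 : (0:ℝ) < t := ht0
  have hnum : f (x + t • d) < f x := by
    have h1 : (f (x + t • d) - f x) / t < 0 := by
      simpa [slope_def_field] using hslope
    have h2 := mul_neg_of_neg_of_pos h1 ht0
    rw [div_mul_cancel₀ _ (ne_of_gt ht0)] at h2
    linarith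
  -- quasiconvex first-order condition at y with u = x + t • d
  have hA : (inner ℝ (gradient f y) ((x + t • d) - y) : ℝ) ≤ 0 := by
    apply derivNonpos (dirDeriv (hdiff y hyΓ) ((x + t • d) - y))
    filter_upwards [Ioo_mem_nhdsGT_of_mem (by simp : (0:ℝ) ∈ Set.Ico (0:ℝ) 1)] with s hs
    have h1 := hqc y hyΓ (x + t • d) hmemΓ s ⟨hs.1.le, hs.2.le⟩
    have h2 : f (x + t • d) ≤ f y := le_of_lt (hfxy ▸ hnum)
    have h3 : max (f y) (f (x + t • d)) = f y := max_eq_left h2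
    rw [h3] at h1
    simpa using h1
  have hexp : ((x + t • d) - y) = (x - y) + t • d := by module
  rw [hexp, inner_add_right, hYxy, zero_add, real_inner_smul_right] at hA
  nlinarith
end

section
/- Let Γ ⊆ ℝⁿ be open and convex, S ⊆ Γ convex, f : Γ → ℝ continuously differentiable and quasiconvex. Let x̄ be a global minimizer of f on S with ∇f(x̄) ≠ 0. Then the solution set S̄ equals the set Ŝ₁ = {x ∈ S | ⟨∇f(x̄), x − x̄⟩ = 0, ∇f(x) ≠ 0, and ∇f(x)/‖∇f(x)‖ = ∇f(x̄)/‖∇f(x̄)‖}. -/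
open Filter Topology InnerProductSpace

section Aux
variable {E : Type*} [NormedAddCommGroup E] [InnerProductSpace ℝ E] [CompleteSpace E]

lemma aux_lineDeriv {f : E → ℝ} {a : E} (hf : DifferentiableAt ℝ f a) (v : E) :
    HasDerivAt (fun t : ℝ => f (a + t • v)) (inner ℝ (gradient f a) v : ℝ) 0 := by
  have hg : HasFDerivAt f (toDual ℝ E (gradient f a)) a := hf.hasGradientAt.hasFDerivAt
  have hc : HasDerivAt (fun t : ℝ => a + t • v) v 0 := by
    simpa using ((hasDerivAt_id (0:ℝ)).smul_const v).const_add a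
  have := HasFDerivAt.comp_hasDerivAt (x := (0:ℝ)) (by simpa using hg) hc
  have e : (inner ℝ (gradient f a) v : ℝ) = fderiv ℝ f a v := by
    rw [hg.fderiv]; simp
  rw [e]; exact this

lemma aux_slopeTendsto {h : ℝ → ℝ} {d : ℝ} (hd : HasDerivAt h d 0) :
    Tendsto (fun t => (h t - h 0) / t) (𝓝[>] (0:ℝ)) (𝓝 d) := by
  have hs : Tendsto (slope h 0) (𝓝[>] (0:ℝ)) (𝓝 d) :=
    (hasDerivAt_iff_tendsto_slope.1 hd).mono_left
      (nhdsWithin_mono _ (by intro t ht; exact ne_of_gt ht))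
  refine hs.congr (fun t => ?_)
  rw [slope_def_field]; ring_nf

lemma aux_deriv_nonpos {h : ℝ → ℝ} {d : ℝ} (hd : HasDerivAt h d 0)
    (hle : ∀ᶠ t in 𝓝[>] (0:ℝ), h t ≤ h 0) : d ≤ 0 := by
  refine le_of_tendsto (aux_slopeTendsto hd) ?_
  filter_upwards [hle, self_mem_nhdsWithin] with t ht ht0
  exact div_nonpos_of_nonpos_of_nonneg (by linarith) (le_of_lt (by simpa using ht0))

lemma aux_deriv_nonneg {h : ℝ → ℝ} {d : ℝ} (hd : HasDerivAt h d 0)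
    (hle : ∀ᶠ t in 𝓝[>] (0:ℝ), h 0 ≤ h t) : 0 ≤ d := by
  refine ge_of_tendsto (aux_slopeTendsto hd) ?_
  filter_upwards [hle, self_mem_nhdsWithin] with t ht ht0
  exact div_nonneg (by linarith) (le_of_lt (by simpa using ht0))

lemma aux_eventually_lt {h : ℝ → ℝ} {d : ℝ} (hd : HasDerivAt h d 0) (hneg : d < 0) :
    ∀ᶠ t in 𝓝[>] (0:ℝ), h t < h 0 := by
  have hev : ∀ᶠ t in 𝓝[>] (0:ℝ), (h t - h 0) / t < 0 :=
    (aux_slopeTendsto hd).eventually (eventually_lt_nhds hneg)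
  filter_upwards [hev, self_mem_nhdsWithin] with t ht ht0
  have ht0' : (0:ℝ) < t := by simpa using ht0
  nlinarith [div_lt_iff₀ ht0' |>.1 ht]

lemma aux_parallel {a b : E} {lam : ℝ}
    (h1 : (inner ℝ a (a - lam • b) : ℝ) = 0) (h2 : (inner ℝ b (a - lam • b) : ℝ) = 0) :
    a = lam • b := by
  have hww : (inner ℝ (a - lam • b) (a - lam • b) : ℝ) = 0 := by
    rw [inner_sub_left, real_inner_smul_left, h1, h2]
    ring
  exact sub_eq_zero.1 (inner_self_eq_zero.1 hww)

lemma aux_unitize {v : E} {lam : ℝ} (hl : 0 < lam) (hv : ‖v‖ = 1) :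
    ‖lam • v‖⁻¹ • lam • v = v := by
  rw [norm_smul, hv, mul_one, Real.norm_eq_abs, abs_of_pos hl, smul_smul,
    inv_mul_cancel₀ (ne_of_gt hl), one_smul]

end Aux

set_option maxHeartbeats 2000000 in
theorem stmt_6 {n : ℕ} (Γ S : Set (EuclideanSpace ℝ (Fin n)))
    (hΓo : IsOpen Γ) (hΓ : Convex ℝ Γ) (hS : Convex ℝ S) (hSΓ : S ⊆ Γ)
    (f : EuclideanSpace ℝ (Fin n) → ℝ)
    (hC1 : ContDiffOn ℝ 1 f Γ)
    (hqc : ∀ x ∈ Γ, ∀ y ∈ Γ, ∀ t ∈ Set.Icc (0:ℝ) 1,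
        f (x + t • (y - x)) ≤ max (f x) (f y))
    (Sbar : Set (EuclideanSpace ℝ (Fin n)))
    (hSbar : Sbar = {x ∈ S | ∀ y ∈ S, f x ≤ f y})
    (xb : EuclideanSpace ℝ (Fin n)) (hxb : xb ∈ Sbar)
    (hgxb : gradient f xb ≠ 0) :
    Sbar = {x ∈ S | (inner ℝ (gradient f xb) (x - xb) : ℝ) = 0 ∧ gradient f x ≠ 0 ∧
      ‖gradient f x‖⁻¹ • gradient f x = ‖gradient f xb‖⁻¹ • gradient f xb} := by
  subst hSbar
  obtain ⟨hxbS, hxbmin⟩ := hxb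
  have hxbΓ : xb ∈ Γ := hSΓ hxbS
  have hdiff : ∀ a ∈ Γ, DifferentiableAt ℝ f a := fun a ha =>
    (hC1.differentiableOn one_ne_zero).differentiableAt (hΓo.mem_nhds ha)
  have hcontf : ContinuousOn f Γ := hC1.continuousOn
  have hgc : ContinuousOn (gradient f) Γ :=
    (toDual ℝ (EuclideanSpace ℝ (Fin n))).symm.continuous.comp_continuousOn
      (hC1.continuousOn_fderiv_of_isOpen hΓo le_rfl)
  set G := gradient f xb with hG
  have hGnorm : (0:ℝ) < ‖G‖ := norm_pos_iff.2 hgxb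
  obtain ⟨g, hgdef⟩ : ∃ g' : EuclideanSpace ℝ (Fin n), g' = ‖G‖⁻¹ • G := ⟨_, rfl⟩
  rw [show ‖G‖⁻¹ • G = g from hgdef.symm]
  have hgnorm : ‖g‖ = 1 := by
    rw [hgdef, norm_smul, norm_inv, norm_norm, inv_mul_cancel₀ (ne_of_gt hGnorm)]
  have hgne : g ≠ 0 := by intro h; rw [h, norm_zero] at hgnorm; norm_num at hgnorm
  have hgg : (inner ℝ g g : ℝ) = 1 := by
    rw [real_inner_self_eq_norm_sq, hgnorm]; norm_num
  have hGg : (inner ℝ G g : ℝ) = ‖G‖ := by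
    rw [hgdef, real_inner_smul_right, real_inner_self_eq_norm_sq]
    field_simp
  have hGsmul : ‖G‖ • g = G := by
    rw [hgdef, smul_inv_smul₀ (ne_of_gt hGnorm)]
  have hmemΓ : ∀ a ∈ Γ, ∀ v : EuclideanSpace ℝ (Fin n),
      ∀ᶠ t in 𝓝[>] (0:ℝ), a + t • v ∈ Γ := by
    intro a ha v
    have hcont : Continuous (fun t : ℝ => a + t • v) := continuous_const.add (continuous_id.smul continuous_const)
    have hten : Tendsto (fun t : ℝ => a + t • v) (𝓝 0) (𝓝 a) := by
      simpa using hcont.tendsto 0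
    exact (hten.eventually (hΓo.eventually_mem ha)).filter_mono nhdsWithin_le_nhds
  have lemA : ∀ a ∈ Γ, ∀ b ∈ Γ, f b ≤ f a → (inner ℝ (gradient f a) (b - a) : ℝ) ≤ 0 := by
    intro a ha b hb hfba
    refine aux_deriv_nonpos (aux_lineDeriv (hdiff a ha) (b - a)) ?_
    filter_upwards [Ioc_mem_nhdsGT_of_mem (Set.mem_Ico.2 ⟨le_rfl, one_pos⟩)] with t ht
    simpa using le_trans (hqc a ha b hb t ⟨ht.1.le, ht.2⟩) (max_le le_rfl hfba)
  have lemA' : ∀ a ∈ Γ, ∀ b ∈ Γ, 0 < (inner ℝ (gradient f a) (b - a) : ℝ) → f a < f b := by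
    intro a ha b hb h
    by_contra hle
    exact absurd (lemA a ha b hb (not_lt.1 hle)) (not_le.2 h)
  ext x
  simp only [Set.mem_setOf_eq]
  constructor
  · rintro ⟨hxS, hxmin⟩
    have hxΓ : x ∈ Γ := hSΓ hxS
    have hfx : f x = f xb := le_antisymm (hxmin xb hxbS) (hxbmin x hxS)
    have hperp : (inner ℝ G (x - xb) : ℝ) = 0 := by
      have h1 : (inner ℝ G (x - xb) : ℝ) ≤ 0 := lemA xb hxbΓ x hxΓ (le_of_eq hfx)
      have h2 : (0:ℝ) ≤ inner ℝ G (x - xb) := by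
        refine aux_deriv_nonneg (aux_lineDeriv (hdiff xb hxbΓ) (x - xb)) ?_
        filter_upwards [Ioc_mem_nhdsGT_of_mem (Set.mem_Ico.2 ⟨le_rfl, one_pos⟩)] with t ht
        have hmem : xb + t • (x - xb) ∈ S := hS.add_smul_sub_mem hxbS hxS ⟨ht.1.le, ht.2⟩
        simpa using hxbmin _ hmem
      linarith
    have posdir : ∀ d : EuclideanSpace ℝ (Fin n), 0 < (inner ℝ G d : ℝ) →
        0 ≤ (inner ℝ (gradient f x) d : ℝ) := by
      intro d hd
      refine aux_deriv_nonneg (aux_lineDeriv (hdiff x hxΓ) d) ?_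
      filter_upwards [hmemΓ x hxΓ d, self_mem_nhdsWithin] with t htΓ ht0
      have ht0' : (0:ℝ) < t := by simpa using ht0
      have hlt : f xb < f (x + t • d) := by
        refine lemA' xb hxbΓ _ htΓ ?_
        have hsplit : x + t • d - xb = (x - xb) + t • d := by abel
        rw [hsplit, inner_add_right, hperp, real_inner_smul_right]
        have := mul_pos ht0' hd
        linarith
      have : f x ≤ f (x + t • d) := by rw [hfx]; exact hlt.le
      simpa using this
    -- choose t₀ with gradient inner ℝ positive along the segment
    have hline : Continuous (fun t : ℝ => xb + t • (x - xb)) := continuous_const.add (continuous_id.smul continuous_const)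
    have hgca : ContinuousAt (gradient f) xb := hgc.continuousAt (hΓo.mem_nhds hxbΓ)
    have hevφ : ∀ᶠ t in 𝓝[>] (0:ℝ),
        0 < (inner ℝ (gradient f (xb + t • (x - xb))) g : ℝ) := by
      have hten0 : Tendsto (fun t : ℝ => xb + t • (x - xb)) (𝓝 0) (𝓝 xb) := by
        simpa using hline.tendsto 0
      have hgten : Tendsto (fun t : ℝ => gradient f (xb + t • (x - xb))) (𝓝 0) (𝓝 G) := by
        simpa [Function.comp_def, hG] using Filter.Tendsto.comp hgca hten0
      have h2 : Tendsto (fun t : ℝ => (inner ℝ (gradient f (xb + t • (x - xb))) g : ℝ)) (𝓝 0)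
          (𝓝 (inner ℝ G g : ℝ)) := hgten.inner tendsto_const_nhds
      have hpos : (0:ℝ) < (inner ℝ G g : ℝ) := by rw [hGg]; exact hGnorm
      exact (h2.eventually (eventually_gt_nhds hpos)).filter_mono nhdsWithin_le_nhds
    have hIoo : ∀ᶠ t in 𝓝[>] (0:ℝ), t ∈ Set.Ioo (0:ℝ) 1 :=
      eventually_of_mem (Ioo_mem_nhdsGT_of_mem (Set.mem_Ico.2 ⟨le_rfl, one_pos⟩)) fun _ h => h
    obtain ⟨t₀, ht₀φ, ht₀⟩ := (hevφ.and hIoo).exists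
    set u := xb + t₀ • (x - xb) with hu
    have huΓ : u ∈ Γ := hΓ.add_smul_sub_mem hxbΓ hxΓ ⟨ht₀.1.le, ht₀.2.le⟩
    have huS : u ∈ S := hS.add_smul_sub_mem hxbS hxS ⟨ht₀.1.le, ht₀.2.le⟩
    have hfu : f u = f xb :=
      le_antisymm (le_trans (hqc xb hxbΓ x hxΓ t₀ ⟨ht₀.1.le, ht₀.2.le⟩)
        (max_le le_rfl (le_of_eq hfx))) (hxbmin u huS)
    set c := t₀ / (2*(1 - t₀)) with hc
    have h1t : (0:ℝ) < 1 - t₀ := by linarith [ht₀.2]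
    have hcpos : 0 < c := div_pos ht₀.1 (by linarith)
    set w : EuclideanSpace ℝ (Fin n) := (t₀/2) • g with hw
    have e2 : ∀ᶠ δ in 𝓝[>] (0:ℝ), f (xb + δ • (-(c • g))) < f xb := by
      have hderiv := aux_lineDeriv (hdiff xb hxbΓ) (-(c • g))
      have hneg : (inner ℝ G (-(c • g)) : ℝ) < 0 := by
        rw [inner_neg_right, real_inner_smul_right, hGg]
        have := mul_pos hcpos hGnorm
        linarith
      have := aux_eventually_lt hderiv hneg
      simpa using this
    have e4 : ∀ᶠ δ in 𝓝[>] (0:ℝ), f xb < f (x + δ • g) := by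
      filter_upwards [hmemΓ x hxΓ g, self_mem_nhdsWithin] with δ hδΓ hδ0
      have hδ0' : (0:ℝ) < δ := by simpa using hδ0
      refine lemA' xb hxbΓ _ hδΓ ?_
      have hsplit : x + δ • g - xb = (x - xb) + δ • g := by abel
      rw [hsplit, inner_add_right, hperp, real_inner_smul_right, hGg]
      have := mul_pos hδ0' hGnorm
      linarith
    have e6 : ∀ᶠ δ in 𝓝[>] (0:ℝ), f (u + δ • w) ≤ f (x + δ • g) := by
      filter_upwards [e2, e4, hmemΓ xb hxbΓ (-(c • g)), hmemΓ x hxΓ g] with δ h2 h4 hyΓ hpΓ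
      have hq := hqc _ hyΓ _ hpΓ t₀ ⟨ht₀.1.le, ht₀.2.le⟩
      have hpt : (xb + δ • (-(c • g))) + t₀ • ((x + δ • g) - (xb + δ • (-(c • g))))
          = u + δ • w := by
        have h1t' : (1:ℝ) - t₀ ≠ 0 := ne_of_gt h1t
        have hsc : t₀*(δ + c*δ) - c*δ = δ * (t₀/2) := by
          rw [hc]; field_simp; ring
        have hpt0 : (xb + δ • (-(c • g))) + t₀ • ((x + δ • g) - (xb + δ • (-(c • g))))
            = (xb + t₀ • (x - xb)) + (t₀*(δ + c*δ) - c*δ) • g := by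
          match_scalars <;> ring
        rw [hpt0, hsc, hu, hw]
        module
      rw [hpt] at hq
      exact le_trans hq (le_of_eq (max_eq_right (lt_trans h2 h4).le))
    have TA : Tendsto (fun δ => (f (u + δ • w) - f u)/δ) (𝓝[>] (0:ℝ))
        (𝓝 (inner ℝ (gradient f u) w : ℝ)) := by
      have := aux_slopeTendsto (aux_lineDeriv (hdiff u huΓ) w)
      simpa using this
    have TB : Tendsto (fun δ => (f (x + δ • g) - f x)/δ) (𝓝[>] (0:ℝ))
        (𝓝 (inner ℝ (gradient f x) g : ℝ)) := by
      have := aux_slopeTendsto (aux_lineDeriv (hdiff x hxΓ) g)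
      simpa using this
    have hcomp : (inner ℝ (gradient f u) w : ℝ) ≤ (inner ℝ (gradient f x) g : ℝ) := by
      refine le_of_tendsto_of_tendsto TA TB ?_
      filter_upwards [e6, self_mem_nhdsWithin] with δ h6 hδ0
      have hδ0' : (0:ℝ) < δ := by simpa using hδ0
      rw [hfu, ← hfx]
      have hnum : f (u + δ • w) - f x ≤ f (x + δ • g) - f x := sub_le_sub_right h6 _
      exact (div_le_div_iff_of_pos_right hδ0').2 hnum
    have hlampos : 0 < (inner ℝ (gradient f x) g : ℝ) := by
      refine lt_of_lt_of_le ?_ hcomp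
      rw [hw, real_inner_smul_right]
      exact mul_pos (by linarith [ht₀.1]) ht₀φ
    -- perpendicular directions are null
    have key : ∀ d' : EuclideanSpace ℝ (Fin n), (inner ℝ G d' : ℝ) = 0 →
        0 ≤ (inner ℝ (gradient f x) d' : ℝ) := by
      intro d' hd'
      by_contra hneg
      push_neg at hneg
      set K := (inner ℝ (gradient f x) g : ℝ) with hK
      set L := (inner ℝ (gradient f x) d' : ℝ) with hL
      have hεpos : 0 < -L / (2*K) := div_pos (by linarith) (by linarith)
      have hpd := posdir (d' + (-L/(2*K)) • g) (by
        rw [inner_add_right, hd', real_inner_smul_right, hGg]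
        have := mul_pos hεpos hGnorm
        linarith)
      rw [inner_add_right, real_inner_smul_right, ← hL, ← hK] at hpd
      have hKne : K ≠ 0 := ne_of_gt hlampos
      have hcalc : (-L/(2*K)) * K = -L/2 := by field_simp
      rw [hcalc] at hpd
      linarith
    have perpdir : ∀ d : EuclideanSpace ℝ (Fin n), (inner ℝ G d : ℝ) = 0 →
        (inner ℝ (gradient f x) d : ℝ) = 0 := by
      intro d hd
      have h1 := key d hd
      have h2 := key (-d) (by rw [inner_neg_right, hd, neg_zero])
      rw [inner_neg_right] at h2
      linarith
    obtain ⟨lam, hlam⟩ : ∃ l : ℝ, l = (inner ℝ (gradient f x) g : ℝ) := ⟨_, rfl⟩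
    rw [← hlam] at hlampos
    have hGgfx : (inner ℝ G (gradient f x) : ℝ) = ‖G‖ * lam := by
      calc (inner ℝ G (gradient f x) : ℝ) = inner ℝ (‖G‖ • g) (gradient f x) := by rw [hGsmul]
        _ = ‖G‖ * lam := by rw [real_inner_smul_left, hlam, real_inner_comm]
    have hGw0 : (inner ℝ G (gradient f x - lam • g) : ℝ) = 0 := by
      rw [inner_sub_right, real_inner_smul_right, hGg, hGgfx]
      ring
    have h1 : (inner ℝ (gradient f x) (gradient f x - lam • g) : ℝ) = 0 :=
      perpdir _ hGw0
    have hginner : (inner ℝ g (gradient f x - lam • g) : ℝ) = 0 := by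
      nth_rewrite 1 [hgdef]
      rw [real_inner_smul_left, hGw0, mul_zero]
    have hgradx : gradient f x = lam • g := aux_parallel h1 hginner
    refine ⟨hxS, hperp, ?_, ?_⟩
    · rw [hgradx]
      exact smul_ne_zero (ne_of_gt hlampos) hgne
    · rw [hgradx]
      exact aux_unitize hlampos hgnorm
  · rintro ⟨hxS, hperp, hgx0, heq⟩
    have hxΓ : x ∈ Γ := hSΓ hxS
    have hgradx : gradient f x = ‖gradient f x‖ • g := by
      have h := congrArg (fun z : EuclideanSpace ℝ (Fin n) => ‖gradient f x‖ • z) heq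
      simp only [smul_inv_smul₀ (norm_ne_zero_iff.2 hgx0)] at h
      exact h
    have hgxnorm : (0:ℝ) < ‖gradient f x‖ := norm_pos_iff.2 hgx0
    have hperp' : (inner ℝ g (xb - x) : ℝ) = 0 := by
      rw [hgdef, real_inner_smul_left]
      have h0 : (inner ℝ G (xb - x) : ℝ) = 0 := by
        rw [show xb - x = -(x - xb) by abel, inner_neg_right, hperp, neg_zero]
      rw [h0, mul_zero]
    have key : ∀ᶠ s in 𝓝[>] (0:ℝ), f x < f (xb + s • g) := by
      filter_upwards [hmemΓ xb hxbΓ g, self_mem_nhdsWithin] with s hsΓ hs0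
      have hs0' : (0:ℝ) < s := by simpa using hs0
      refine lemA' x hxΓ _ hsΓ ?_
      rw [hgradx, real_inner_smul_left,
        show xb + s • g - x = (xb - x) + s • g by abel,
        inner_add_right, hperp', real_inner_smul_right, hgg]
      have := mul_pos hgxnorm hs0'
      nlinarith
    have hten : Tendsto (fun s : ℝ => f (xb + s • g)) (𝓝[>] (0:ℝ)) (𝓝 (f xb)) := by
      have hca : ContinuousAt f xb := hcontf.continuousAt (hΓo.mem_nhds hxbΓ)
      have hcont : Continuous (fun s : ℝ => xb + s • g) := continuous_const.add (continuous_id.smul continuous_const)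
      have hline : Tendsto (fun s : ℝ => xb + s • g) (𝓝 0) (𝓝 xb) := by
        simpa using hcont.tendsto 0
      exact (hca.tendsto.comp hline).mono_left nhdsWithin_le_nhds
    have hfxle : f x ≤ f xb := ge_of_tendsto hten (key.mono fun s hs => hs.le)
    exact ⟨hxS, fun y hy => le_trans hfxle (hxbmin y hy)⟩
end

section
/- Let Γ ⊆ ℝⁿ be open and convex, S ⊆ Γ convex, f : Γ → ℝ continuously differentiable and quasiconvex. Let x̄ be a global minimizer of f on S with ∇f(x̄) ≠ 0. Then the solution set S̄ equals the set Ŝ₂ = {x ∈ S | ⟨∇f(x̄), x − x̄⟩ ≤ 0, ∇f(x) ≠ 0, and ∇f(x)/‖∇f(x)‖ = ∇f(x̄)/‖∇f(x̄)‖}. -/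
open Set Filter Topology

section QuasiconvexHelpers
variable {E : Type*} [NormedAddCommGroup E] [InnerProductSpace ℝ E] [CompleteSpace E]
local notation "⟪" x ", " y "⟫" => @inner ℝ _ _ x y

lemma lineDeriv'' {Γ : Set E} (hΓo : IsOpen Γ) {f : E → ℝ} (hC1 : ContDiffOn ℝ 1 f Γ)
    {p v : E} {t₀ : ℝ} (hq : p + t₀ • v ∈ Γ) :
    HasDerivAt (fun t : ℝ => f (p + t • v)) ⟪gradient f (p + t₀ • v), v⟫ t₀ := by
  have hdiff : DifferentiableAt ℝ f (p + t₀ • v) :=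
    (hC1.differentiableOn one_ne_zero).differentiableAt (hΓo.mem_nhds hq)
  have hfd := hasGradientAt_iff_hasFDerivAt.mp hdiff.hasGradientAt
  have hcurve : HasDerivAt (fun t : ℝ => p + t • v) v t₀ := by
    simpa using ((hasDerivAt_id t₀).smul_const v).const_add p
  have h2 := hfd.comp_hasDerivAt t₀ hcurve
  exact h2

lemma deriv_nonpos_of_le'' {φ : ℝ → ℝ} {m ε : ℝ} (hφ : HasDerivAt φ m 0) (hε : 0 < ε)
    (h : ∀ t ∈ Set.Ioc (0:ℝ) ε, φ t ≤ φ 0) : m ≤ 0 := by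
  have hs := hasDerivAt_iff_tendsto_slope.mp hφ
  have hs' : Tendsto (slope φ 0) (𝓝[>] 0) (𝓝 m) :=
    hs.mono_left (nhdsWithin_mono _ (fun t ht => ne_of_gt ht))
  refine le_of_tendsto hs' ?_
  filter_upwards [Ioc_mem_nhdsGT hε] with t ht
  have h1 := h t ht
  have h2 : (0:ℝ) < t := ht.1
  rw [slope_def_field]
  apply div_nonpos_of_nonpos_of_nonneg <;> linarith

lemma eventually_lt_of_deriv_neg'' {φ : ℝ → ℝ} {m : ℝ} (hφ : HasDerivAt φ m 0) (hm : m < 0) :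
    ∀ᶠ t in 𝓝[>] (0:ℝ), φ t < φ 0 := by
  have hs := hasDerivAt_iff_tendsto_slope.mp hφ
  have hs' : Tendsto (slope φ 0) (𝓝[>] 0) (𝓝 m) :=
    hs.mono_left (nhdsWithin_mono _ (fun t ht => ne_of_gt ht))
  have hev := hs'.eventually_lt_const hm
  filter_upwards [hev, self_mem_nhdsWithin] with t h1 h2
  rw [slope_def_field] at h1
  have ht : (0:ℝ) < t := h2
  have := (div_neg_iff).mp (by simpa using h1)
  rcases this with ⟨_, h⟩ | ⟨h, _⟩ <;> linarith


lemma slope_small'' {φ : ℝ → ℝ} (hφ : HasDerivAt φ 0 0) {c : ℝ} (hc : 0 < c) :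
    ∀ᶠ t in 𝓝[>] (0:ℝ), φ t ≤ φ 0 + c * t := by
  have hs := hasDerivAt_iff_tendsto_slope.mp hφ
  have hs' : Tendsto (slope φ 0) (𝓝[>] 0) (𝓝 0) :=
    hs.mono_left (nhdsWithin_mono _ (fun t ht => ne_of_gt ht))
  filter_upwards [hs'.eventually_lt_const hc, self_mem_nhdsWithin] with t h1 h2
  rw [slope_def_field] at h1
  have ht : (0:ℝ) < t := h2
  rw [sub_zero] at h1
  have := (div_lt_iff₀ ht).mp h1
  nlinarith

variable {Γ : Set E} {f : E → ℝ}

lemma dir_nonpos (hΓo : IsOpen Γ) (hC1 : ContDiffOn ℝ 1 f Γ)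
    (hqc : ∀ x ∈ Γ, ∀ y ∈ Γ, ∀ t ∈ Set.Icc (0:ℝ) 1,
        f (x + t • (y - x)) ≤ max (f x) (f y))
    {p z : E} (hp : p ∈ Γ) (hz : z ∈ Γ) (hfz : f z ≤ f p) :
    ⟪gradient f p, z - p⟫ ≤ 0 := by
  have hd : HasDerivAt (fun t : ℝ => f (p + t • (z - p))) ⟪gradient f p, z - p⟫ 0 := by
    have := lineDeriv'' hΓo hC1 (p := p) (v := z - p) (t₀ := 0) (by simpa using hp)
    simpa using this
  refine deriv_nonpos_of_le'' hd one_pos ?_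
  intro t ht
  have h1 := hqc p hp z hz t ⟨le_of_lt ht.1, ht.2⟩
  have h2 : max (f p) (f z) = f p := max_eq_left hfz
  simpa [h2] using h1

lemma dir_neg (hΓo : IsOpen Γ) (hC1 : ContDiffOn ℝ 1 f Γ)
    (hqc : ∀ x ∈ Γ, ∀ y ∈ Γ, ∀ t ∈ Set.Icc (0:ℝ) 1,
        f (x + t • (y - x)) ≤ max (f x) (f y))
    {p u : E} (hp : p ∈ Γ) (hu : u ∈ Γ)
    (hgp : gradient f p ≠ 0) (hfu : f u < f p) : ⟪gradient f p, u - p⟫ < 0 := by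
  set h := gradient f p with hh
  have hcont : ContinuousAt f u := (hC1.continuousOn.continuousAt (hΓo.mem_nhds hu))
  have hnb : Γ ∩ f ⁻¹' Iio (f p) ∈ 𝓝 u :=
    Filter.inter_mem (hΓo.mem_nhds hu) (hcont.preimage_mem_nhds (Iio_mem_nhds hfu))
  obtain ⟨ρ, hρpos, hball⟩ := Metric.mem_nhds_iff.mp hnb
  have hnorm : (0:ℝ) < ‖h‖ := norm_pos_iff.mpr hgp
  set z := u + (ρ/2) • (‖h‖⁻¹ • h) with hzdef
  have hzmem : z ∈ Metric.ball u ρ := by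
    have : ‖(ρ/2) • (‖h‖⁻¹ • h)‖ = ρ/2 := by
      rw [norm_smul, norm_smul, norm_inv, norm_norm, Real.norm_eq_abs,
        abs_of_pos (by linarith : (0:ℝ) < ρ/2), inv_mul_cancel₀ (ne_of_gt hnorm), mul_one]
    simp only [hzdef, Metric.mem_ball, dist_eq_norm, add_sub_cancel_left]
    rw [this]; linarith
  have hz := hball hzmem
  have h3 : ⟪h, z - p⟫ ≤ 0 := dir_nonpos hΓo hC1 hqc hp hz.1 (le_of_lt hz.2)
  have h4 : ⟪h, z - p⟫ = ⟪h, u - p⟫ + (ρ/2) * ‖h‖ := by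
    have : z - p = (u - p) + (ρ/2) • (‖h‖⁻¹ • h) := by rw [hzdef]; abel
    rw [this, inner_add_right, real_inner_smul_right, real_inner_smul_right,
      real_inner_self_eq_norm_sq]
    field_simp
  nlinarith

set_option maxHeartbeats 1000000 in
lemma grad_ne_zero (hΓo : IsOpen Γ) (hC1 : ContDiffOn ℝ 1 f Γ)
    (hqc : ∀ x ∈ Γ, ∀ y ∈ Γ, ∀ t ∈ Set.Icc (0:ℝ) 1,
        f (x + t • (y - x)) ≤ max (f x) (f y))
    {xb x : E} (hxbΓ : xb ∈ Γ) (hxΓ : x ∈ Γ) (hg : gradient f xb ≠ 0)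
    (hconst : ∀ t ∈ Set.Icc (0:ℝ) 1, f (xb + t • (x - xb)) = f xb) :
    gradient f x ≠ 0 := by
  rcases eq_or_ne x xb with rfl | hne
  · exact hg
  intro h0
  set g := gradient f xb with hgdef
  have hgn : (0:ℝ) < ‖g‖ := norm_pos_iff.mpr hg
  set gh : E := ‖g‖⁻¹ • g with ghdef
  have hgh1 : ‖gh‖ = 1 := by
    rw [ghdef, norm_smul, norm_inv, norm_norm, inv_mul_cancel₀ (ne_of_gt hgn)]
  have hbridge : ∀ u : E, ⟪gradient f u, gh⟫ = fderiv ℝ f u gh := fun u =>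
    InnerProductSpace.toDual_symm_apply
  have hfx : f x = f xb := by simpa using hconst 1 ⟨zero_le_one, le_refl 1⟩
  set μ : ℝ := ‖g‖ / 2 with hμdef
  have hμpos : 0 < μ := by positivity
  -- gradient lower bound near xb
  have hFc : ContinuousAt (fun u => fderiv ℝ f u gh) xb :=
    ((hC1.continuousOn_fderiv_of_isOpen hΓo le_rfl).clm_apply
      continuousOn_const).continuousAt (hΓo.mem_nhds hxbΓ)
  have hval : fderiv ℝ f xb gh = ‖g‖ := by
    rw [← hbridge, ← hgdef, ghdef, real_inner_smul_right, real_inner_self_eq_norm_sq]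
    field_simp
  have hnb : {u : E | μ < fderiv ℝ f u gh} ∩ Γ ∈ 𝓝 xb := by
    refine Filter.inter_mem ?_ (hΓo.mem_nhds hxbΓ)
    have heq : {u : E | μ < fderiv ℝ f u gh} = (fun u => fderiv ℝ f u gh) ⁻¹' Ioi μ := rfl
    rw [heq]
    refine hFc.preimage_mem_nhds (Ioi_mem_nhds ?_)
    rw [hval, hμdef]; linarith
  obtain ⟨ε, hεpos, hεball⟩ := Metric.mem_nhds_iff.mp hnb
  set r : ℝ := ε / 3 with hrdef
  have hrpos : 0 < r := by positivity
  -- decrease direction at xb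
  have hd1 : HasDerivAt (fun t : ℝ => f (xb + t • (-gh))) ⟪g, -gh⟫ 0 := by
    have := lineDeriv'' hΓo hC1 (p := xb) (v := -gh) (t₀ := 0) (by simpa using hxbΓ)
    simpa [hgdef] using this
  have hd1neg : ⟪g, -gh⟫ < 0 := by
    rw [inner_neg_right, ghdef, real_inner_smul_right, real_inner_self_eq_norm_sq]
    have : (0:ℝ) < ‖g‖⁻¹ * ‖g‖ ^ 2 := by positivity
    linarith
  have hmemev1 : ∀ᶠ t in 𝓝 (0:ℝ), xb + t • (-gh) ∈ Γ := by
    have hc : Continuous fun t : ℝ => xb + t • (-gh) := by continuity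
    exact hc.continuousAt.eventually_mem (by simpa using hΓo.mem_nhds hxbΓ)
  have hev1 : ∀ᶠ t in 𝓝[>] (0:ℝ), f (xb + t • (-gh)) < f xb ∧ xb + t • (-gh) ∈ Γ := by
    filter_upwards [eventually_lt_of_deriv_neg'' hd1 hd1neg,
      eventually_nhdsWithin_of_eventually_nhds hmemev1] with t h1 h2
    exact ⟨by simpa using h1, h2⟩
  obtain ⟨δ₀, hδ₀pos, hδ₀⟩ := (nhdsGT_basis (0:ℝ)).eventually_iff.mp hev1
  -- choose t'
  have hxxb : (0:ℝ) < ‖x - xb‖ := by rw [norm_pos_iff, sub_ne_zero]; exact hne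
  set t' : ℝ := min (1/2) (r / ‖x - xb‖) with ht'def
  have ht'pos : 0 < t' := lt_min (by norm_num) (div_pos hrpos hxxb)
  have ht'le : t' ≤ 1/2 := min_le_left _ _
  have ht'r : t' * ‖x - xb‖ ≤ r := by
    calc t' * ‖x - xb‖ ≤ (r / ‖x - xb‖) * ‖x - xb‖ :=
          mul_le_mul_of_nonneg_right (min_le_right _ _) (norm_nonneg _)
      _ = r := div_mul_cancel₀ _ (ne_of_gt hxxb)
  -- upper bound near x
  have hd2 : HasDerivAt (fun a : ℝ => f (x + a • gh)) 0 0 := by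
    have := lineDeriv'' hΓo hC1 (p := x) (v := gh) (t₀ := 0) (by simpa using hxΓ)
    simpa [h0] using this
  have hmemev2 : ∀ᶠ t in 𝓝 (0:ℝ), x + t • gh ∈ Γ := by
    have hc : Continuous fun t : ℝ => x + t • gh := by continuity
    exact hc.continuousAt.eventually_mem (by simpa using hΓo.mem_nhds hxΓ)
  have hev2 : ∀ᶠ a in 𝓝[>] (0:ℝ),
      (f (x + a • gh) ≤ f x + (μ * t' / 4) * a) ∧ x + a • gh ∈ Γ := by
    filter_upwards [slope_small'' hd2 (by positivity : (0:ℝ) < μ * t' / 4),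
      eventually_nhdsWithin_of_eventually_nhds hmemev2] with t h1 h2
    exact ⟨by simpa using h1, h2⟩
  obtain ⟨a₀, ha₀pos, ha₀⟩ := (nhdsGT_basis (0:ℝ)).eventually_iff.mp hev2
  -- choose s
  set s : ℝ := min (a₀ / 2) (min r (δ₀ / 2)) with hsdef
  have hspos : 0 < s := lt_min (by linarith) (lt_min hrpos (by linarith))
  have hsa₀ : s < a₀ := lt_of_le_of_lt (min_le_left _ _) (by linarith)
  have hsr : s ≤ r := le_trans (min_le_right _ _) (min_le_left _ _)
  have hsδ₀ : s ≤ δ₀ / 2 := le_trans (min_le_right _ _) (min_le_right _ _)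
  have h1t : (0:ℝ) < 1 - t' := by linarith
  set δ : ℝ := t' * s / (2 * (1 - t')) with hδdef
  have hδpos : 0 < δ := by positivity
  have hts2 : t' * s ≤ s / 2 := by nlinarith [mul_le_mul_of_nonneg_right ht'le (le_of_lt hspos)]
  have hδle : δ ≤ t' * s := by
    rw [hδdef, div_le_iff₀ (by linarith)]
    have key : (1:ℝ) ≤ 2 * (1 - t') := by linarith
    calc t' * s = t' * s * 1 := by ring
      _ ≤ t' * s * (2 * (1 - t')) := by nlinarith [mul_pos ht'pos hspos]
  have hδlt : δ < δ₀ := by linarith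
  set P : E := xb + δ • (-gh) with hPdef
  have hP := hδ₀ ⟨hδpos, hδlt⟩
  set W : E := x + s • gh with hWdef
  have hW := ha₀ ⟨hspos, hsa₀⟩
  set c : ℝ := μ * t' / 4 * s with hcdef
  have hcpos : 0 < c := by positivity
  have hQ1 : f (P + t' • (W - P)) ≤ max (f P) (f W) :=
    hqc P hP.2 W hW.2 t' ⟨le_of_lt ht'pos, by linarith⟩
  have hmax : max (f P) (f W) ≤ f xb + c := by
    refine max_le (by linarith [hP.1]) ?_
    rw [hfx] at hW
    linarith [hW.1]
  set a : ℝ := t' * s / 2 with hadef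
  have hapos : 0 < a := by positivity
  set y₀ : E := xb + t' • (x - xb) with hy₀def
  have hQeq : P + t' • (W - P) = y₀ + a • gh := by
    rw [hPdef, hWdef, hy₀def, hδdef, hadef]
    match_scalars <;> field_simp <;> ring
  -- membership of the path in the good ball
  have hmem2 : ∀ τ ∈ Icc (0:ℝ) a, y₀ + τ • gh ∈ Metric.ball xb ε := by
    intro τ hτ
    have h1 : ‖y₀ + τ • gh - xb‖ ≤ t' * ‖x - xb‖ + τ := by
      have heq2 : y₀ + τ • gh - xb = t' • (x - xb) + τ • gh := by
        rw [hy₀def]; abel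
      rw [heq2]
      refine le_trans (norm_add_le _ _) ?_
      rw [norm_smul, norm_smul, hgh1, Real.norm_eq_abs, Real.norm_eq_abs,
        abs_of_pos ht'pos, abs_of_nonneg hτ.1, mul_one]
    have h2 : a ≤ r := by
      rw [hadef]; nlinarith
    simp only [Metric.mem_ball, dist_eq_norm]
    have : t' * ‖x - xb‖ + τ ≤ r + r := by
      have := hτ.2
      have h3 : τ ≤ r := le_trans hτ.2 h2
      linarith [ht'r]
    calc ‖y₀ + τ • gh - xb‖ ≤ r + r := le_trans h1 this
      _ < ε := by rw [hrdef]; linarith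
  have hballprop : ∀ u ∈ Metric.ball xb ε, μ ≤ ⟪gradient f u, gh⟫ ∧ u ∈ Γ := by
    intro u hu
    exact ⟨by rw [hbridge]; exact le_of_lt (hεball hu).1, (hεball hu).2⟩
  set φ : ℝ → ℝ := fun τ => f (y₀ + τ • gh) with hφdef
  have hder : ∀ τ ∈ Icc (0:ℝ) a, HasDerivAt φ ⟪gradient f (y₀ + τ • gh), gh⟫ τ :=
    fun τ hτ => lineDeriv'' hΓo hC1 ((hballprop _ (hmem2 τ hτ)).2)
  have hcontφ : ContinuousOn φ (Icc 0 a) :=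
    fun τ hτ => ((hder τ hτ).continuousAt).continuousWithinAt
  obtain ⟨ξ, hξ, hslope⟩ := exists_hasDerivAt_eq_slope φ
    (fun τ => ⟪gradient f (y₀ + τ • gh), gh⟫) hapos hcontφ
    (fun τ hτ => hder τ ⟨le_of_lt hτ.1, le_of_lt hτ.2⟩)
  have hlow : μ ≤ (φ a - φ 0) / (a - 0) := by
    rw [← hslope]
    exact (hballprop _ (hmem2 ξ ⟨le_of_lt hξ.1, le_of_lt hξ.2⟩)).1
  have hφ0 : φ 0 = f xb := by
    have : φ 0 = f y₀ := by simp [hφdef]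
    rw [this, hy₀def]
    exact hconst t' ⟨le_of_lt ht'pos, by linarith⟩
  have hφa : φ a ≤ f xb + c := by
    rw [hφdef]
    calc f (y₀ + a • gh) = f (P + t' • (W - P)) := by rw [hQeq]
      _ ≤ max (f P) (f W) := hQ1
      _ ≤ f xb + c := hmax
  rw [sub_zero, hφ0] at hlow
  have hfin : μ * a ≤ c := by
    have := (le_div_iff₀ hapos).mp hlow
    linarith
  rw [hadef, hcdef] at hfin
  nlinarith

end QuasiconvexHelpers

set_option maxHeartbeats 1000000 in
theorem stmt_7 {n : ℕ} (Γ S : Set (EuclideanSpace ℝ (Fin n)))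
    (hΓo : IsOpen Γ) (hΓ : Convex ℝ Γ) (hS : Convex ℝ S) (hSΓ : S ⊆ Γ)
    (f : EuclideanSpace ℝ (Fin n) → ℝ)
    (hC1 : ContDiffOn ℝ 1 f Γ)
    (hqc : ∀ x ∈ Γ, ∀ y ∈ Γ, ∀ t ∈ Set.Icc (0:ℝ) 1,
        f (x + t • (y - x)) ≤ max (f x) (f y))
    (Sbar : Set (EuclideanSpace ℝ (Fin n)))
    (hSbar : Sbar = {x ∈ S | ∀ y ∈ S, f x ≤ f y})
    (xb : EuclideanSpace ℝ (Fin n)) (hxb : xb ∈ Sbar)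
    (hgxb : gradient f xb ≠ 0) :
    Sbar = {x ∈ S | (inner ℝ (gradient f xb) (x - xb) : ℝ) ≤ 0 ∧ gradient f x ≠ 0 ∧
      ‖gradient f x‖⁻¹ • gradient f x = ‖gradient f xb‖⁻¹ • gradient f xb} := by
  rw [hSbar] at hxb ⊢
  obtain ⟨hxbS, hxbmin⟩ := hxb
  have hxbΓ : xb ∈ Γ := hSΓ hxbS
  ext u
  simp only [Set.mem_setOf_eq, Set.mem_sep_iff]
  constructor
  · rintro ⟨huS, humin⟩
    have huΓ : u ∈ Γ := hSΓ huS
    have hfu : f u = f xb := le_antisymm (humin xb hxbS) (hxbmin u huS)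
    have hseg : ∀ t ∈ Set.Icc (0:ℝ) 1, f (xb + t • (u - xb)) = f xb := by
      intro t ht
      have hmem : xb + t • (u - xb) ∈ S := by
        have h2 := hS hxbS huS (sub_nonneg.mpr ht.2) ht.1 (by ring)
        convert h2 using 1
        module
      refine le_antisymm ?_ (hxbmin _ hmem)
      calc f (xb + t • (u - xb)) ≤ max (f xb) (f u) := hqc xb hxbΓ u huΓ t ht
        _ = f xb := by rw [hfu, max_self]
    have hseg' : ∀ t ∈ Set.Icc (0:ℝ) 1, f (u + t • (xb - u)) = f u := by
      intro t ht
      have h1 : u + t • (xb - u) = xb + (1 - t) • (u - xb) := by module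
      rw [h1, hfu]
      exact hseg (1 - t) ⟨by linarith [ht.2], by linarith [ht.1]⟩
    have derivzero : ∀ (p w : EuclideanSpace ℝ (Fin n)), p ∈ Γ →
        (∀ t ∈ Set.Icc (0:ℝ) 1, f (p + t • w) = f p) →
        (inner ℝ (gradient f p) w : ℝ) = 0 := by
      intro p w hp hcw
      have hd : HasDerivAt (fun t : ℝ => f (p + t • w)) (inner ℝ (gradient f p) w : ℝ) 0 := by
        have := lineDeriv'' hΓo hC1 (p := p) (v := w) (t₀ := 0) (by simpa using hp)
        simpa using this
      have h1 : (inner ℝ (gradient f p) w : ℝ) ≤ 0 := by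
        refine deriv_nonpos_of_le'' hd one_pos ?_
        intro t ht
        show f (p + t • w) ≤ f (p + (0:ℝ) • w)
        rw [hcw t ⟨le_of_lt ht.1, ht.2⟩]
        simp
      have h2 : (0:ℝ) ≤ (inner ℝ (gradient f p) w : ℝ) := by
        have h3 := deriv_nonpos_of_le'' hd.neg one_pos ?_
        · linarith
        · intro t ht
          show -f (p + t • w) ≤ -f (p + (0:ℝ) • w)
          rw [hcw t ⟨le_of_lt ht.1, ht.2⟩]
          simp
      linarith
    have e1 : (inner ℝ (gradient f xb) (u - xb) : ℝ) = 0 := derivzero xb (u - xb) hxbΓ hseg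
    have e2 : (inner ℝ (gradient f u) (xb - u) : ℝ) = 0 := derivzero u (xb - u) huΓ hseg'
    have hgu : gradient f u ≠ 0 := grad_ne_zero hΓo hC1 hqc hxbΓ huΓ hgxb hseg
    refine ⟨huS, le_of_eq e1, hgu, ?_⟩
    set g := gradient f xb with hgdef
    set h := gradient f u with hhdef
    have hgn : (0:ℝ) < ‖g‖ := norm_pos_iff.mpr hgxb
    have hhn : (0:ℝ) < ‖h‖ := norm_pos_iff.mpr hgu
    have claim1 : ∀ v : EuclideanSpace ℝ (Fin n), (inner ℝ g v : ℝ) < 0 → (inner ℝ h v : ℝ) ≤ 0 := by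
      intro v hv
      have hd : HasDerivAt (fun t : ℝ => f (xb + t • v)) (inner ℝ g v : ℝ) 0 := by
        have := lineDeriv'' hΓo hC1 (p := xb) (v := v) (t₀ := 0) (by simpa using hxbΓ)
        simpa [hgdef] using this
      have hmemev : ∀ᶠ t in 𝓝 (0:ℝ), xb + t • v ∈ Γ := by
        have hc : Continuous fun t : ℝ => xb + t • v := by continuity
        exact hc.continuousAt.eventually_mem (by simpa using hΓo.mem_nhds hxbΓ)
      have hev : ∀ᶠ t in 𝓝[>] (0:ℝ), f (xb + t • v) < f xb ∧ xb + t • v ∈ Γ := by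
        filter_upwards [eventually_lt_of_deriv_neg'' hd hv,
          eventually_nhdsWithin_of_eventually_nhds hmemev] with t h1 h2
        exact ⟨by simpa using h1, h2⟩
      obtain ⟨s, hspos, hs⟩ := (nhdsGT_basis (0:ℝ)).eventually_iff.mp hev
      obtain ⟨hz1, hz2⟩ := hs (⟨by linarith, by linarith⟩ : s/2 ∈ Set.Ioo 0 s)
      have h3 : (inner ℝ h ((xb + (s/2) • v) - u) : ℝ) ≤ 0 := by
        refine dir_nonpos hΓo hC1 hqc huΓ hz2 ?_
        rw [hfu]; exact le_of_lt hz1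
      have h4 : (xb + (s/2) • v) - u = (xb - u) + (s/2) • v := by abel
      rw [h4, inner_add_right, e2, real_inner_smul_right, zero_add] at h3
      nlinarith
    have claim2 : ∀ v : EuclideanSpace ℝ (Fin n), (inner ℝ g v : ℝ) ≤ 0 → (inner ℝ h v : ℝ) ≤ 0 := by
      intro v hv
      have key : ∀ ε : ℝ, 0 < ε → (inner ℝ h v : ℝ) ≤ ε * (inner ℝ h g : ℝ) := by
        intro ε hε
        have h1 : (inner ℝ g (v - ε • g) : ℝ) < 0 := by
          rw [inner_sub_right, real_inner_smul_right, real_inner_self_eq_norm_sq]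
          have hp2 : (0:ℝ) < ε * ‖g‖ ^ 2 := by positivity
          linarith
        have h2 := claim1 _ h1
        rw [inner_sub_right, real_inner_smul_right, sub_nonpos] at h2
        exact h2
      by_contra hpos
      push_neg at hpos
      rcases le_or_gt (inner ℝ h g : ℝ) 0 with hc | hc
      · have := key 1 one_pos; nlinarith
      · have hb : (inner ℝ h g : ℝ) ≠ 0 := ne_of_gt hc
        obtain ⟨A, hA⟩ : ∃ A : ℝ, A = (inner ℝ h v : ℝ) := ⟨_, rfl⟩
        obtain ⟨B, hB⟩ : ∃ B : ℝ, B = (inner ℝ h g : ℝ) := ⟨_, rfl⟩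
        rw [← hB] at hb hc
        rw [← hA] at hpos
        have hk := key (A / (2 * B)) (div_pos hpos (by linarith))
        rw [← hA, ← hB] at hk
        have hdiv : A / (2 * B) * B = A / 2 := by
          field_simp
        rw [hdiv] at hk
        linarith
    have chg : (0:ℝ) ≤ (inner ℝ h g : ℝ) := by
      have h1 : (inner ℝ g (-g) : ℝ) < 0 := by
        rw [inner_neg_right, real_inner_self_eq_norm_sq]
        nlinarith
      have := claim1 (-g) h1
      rw [inner_neg_right] at this; linarith
    set lam : ℝ := (inner ℝ h g : ℝ) / ‖g‖ ^ 2 with hlamdef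
    have hlamnn : 0 ≤ lam := div_nonneg chg (by positivity)
    have hv0 : (inner ℝ g (h - lam • g) : ℝ) = 0 := by
      rw [inner_sub_right, real_inner_smul_right, real_inner_self_eq_norm_sq, hlamdef,
        real_inner_comm]
      have hg2 : ‖g‖ ^ 2 ≠ 0 := by positivity
      rw [div_mul_cancel₀ _ hg2, sub_self]
    have h1 : (inner ℝ h (h - lam • g) : ℝ) ≤ 0 := claim2 _ (le_of_eq hv0)
    have hzero : h - lam • g = 0 := by
      rw [← real_inner_self_nonpos]
      have he : (inner ℝ (h - lam • g) (h - lam • g) : ℝ)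
          = (inner ℝ h (h - lam • g) : ℝ) - lam * (inner ℝ g (h - lam • g) : ℝ) := by
        rw [inner_sub_left, real_inner_smul_left]
      rw [he, hv0]
      linarith
    have hEq : h = lam • g := by rwa [sub_eq_zero] at hzero
    have hlampos : 0 < lam := by
      rcases eq_or_lt_of_le hlamnn with he | hlt
      · exfalso; apply hgu; rw [hEq, ← he, zero_smul]
      · exact hlt
    rw [hEq, norm_smul, Real.norm_eq_abs, abs_of_pos hlampos, smul_smul]
    congr 1
    rw [mul_inv, mul_right_comm, inv_mul_cancel₀ (ne_of_gt hlampos), one_mul]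
  · rintro ⟨huS, hle, hgu, heq⟩
    have huΓ : u ∈ Γ := hSΓ huS
    have hkey : f u ≤ f xb := by
      by_contra hgt
      push_neg at hgt
      have h1 : (inner ℝ (gradient f u) (xb - u) : ℝ) < 0 :=
        dir_neg hΓo hC1 hqc huΓ hxbΓ hgu hgt
      have hupos : (0:ℝ) < ‖gradient f u‖ := norm_pos_iff.mpr hgu
      have hh : gradient f u = (‖gradient f u‖ * ‖gradient f xb‖⁻¹) • gradient f xb := by
        have h2 : ‖gradient f u‖ • (‖gradient f u‖⁻¹ • gradient f u)
            = ‖gradient f u‖ • (‖gradient f xb‖⁻¹ • gradient f xb) := by rw [heq]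
        rw [smul_smul, smul_smul, mul_inv_cancel₀ (ne_of_gt hupos), one_smul] at h2
        exact h2
      rw [hh, real_inner_smul_left] at h1
      have hpos : 0 < ‖gradient f u‖ * ‖gradient f xb‖⁻¹ :=
        mul_pos hupos (inv_pos.mpr (norm_pos_iff.mpr hgxb))
      have h3 : (inner ℝ (gradient f xb) (xb - u) : ℝ) < 0 := by
        by_contra h4; push_neg at h4; nlinarith
      have h5 : (inner ℝ (gradient f xb) (u - xb) : ℝ) > 0 := by
        have he : (inner ℝ (gradient f xb) (u - xb) : ℝ)
            = -(inner ℝ (gradient f xb) (xb - u) : ℝ) := by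
          rw [← inner_neg_right]
          congr 1
          abel
        rw [he]; linarith
      linarith
    exact ⟨huS, fun y hy => le_trans hkey (hxbmin y hy)⟩
end

section
/- Let Γ ⊆ ℝⁿ be open and convex, S ⊆ Γ convex, f : Γ → ℝ continuously differentiable and quasiconvex. Suppose x̄ is a global minimizer of f over S with ∇f(x̄) = 0, and suppose f is pseudoconvex at every point x ∈ S that is not a global minimizer. Then the solution set S̄ equals {x ∈ S | ∇f(x) = 0}. -/
open InnerProductSpace Set Filter Topology

theorem stmt_8 {n : ℕ} (Γ S : Set (EuclideanSpace ℝ (Fin n)))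
    (hΓo : IsOpen Γ) (hΓ : Convex ℝ Γ) (hS : Convex ℝ S) (hSΓ : S ⊆ Γ)
    (f : EuclideanSpace ℝ (Fin n) → ℝ)
    (hC1 : ContDiffOn ℝ 1 f Γ)
    (hqc : ∀ x ∈ Γ, ∀ y ∈ Γ, ∀ t ∈ Set.Icc (0:ℝ) 1,
        f (x + t • (y - x)) ≤ max (f x) (f y))
    (Sbar : Set (EuclideanSpace ℝ (Fin n)))
    (hSbar : Sbar = {x ∈ S | ∀ y ∈ S, f x ≤ f y})
    (xb : EuclideanSpace ℝ (Fin n)) (hxb : xb ∈ Sbar)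
    (hgxb : gradient f xb = 0)
    (hpc : ∀ x ∈ S, x ∉ Sbar → ∀ y ∈ Γ, f y < f x →
      (inner ℝ (gradient f x) (y - x) : ℝ) < 0) :
    Sbar = {x ∈ S | gradient f x = 0} := by
  have hxbS : xb ∈ S := by rw [hSbar] at hxb; exact hxb.1
  have hxbmin : ∀ y ∈ S, f xb ≤ f y := by rw [hSbar] at hxb; exact hxb.2
  have hxbΓ : xb ∈ Γ := hSΓ hxbS
  have hdiff : ∀ p ∈ Γ, DifferentiableAt ℝ f p := fun p hp =>
    (hC1.contDiffAt (hΓo.mem_nhds hp)).differentiableAt one_ne_zero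
  ext x
  rw [hSbar]
  simp only [Set.mem_sep_iff]
  constructor
  · rintro ⟨hxS, hxmin⟩
    refine ⟨hxS, ?_⟩
    by_contra hg
    have hxΓ : x ∈ Γ := hSΓ hxS
    have hfxbx : f xb = f x := le_antisymm (hxbmin x hxS) (hxmin xb hxbS)
    set g := gradient f x with hg0
    have hgnorm : (0:ℝ) < ‖g‖ := norm_pos_iff.mpr hg
    -- points on the segment
    have hzS : ∀ t ∈ Icc (0:ℝ) 1, x + t • (xb - x) ∈ S := fun t ht =>
      hS.add_smul_sub_mem hxS hxbS ht
    have hzΓ : ∀ t ∈ Icc (0:ℝ) 1, x + t • (xb - x) ∈ Γ := fun t ht => hSΓ (hzS t ht)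
    have hzc : ∀ t ∈ Icc (0:ℝ) 1, f (x + t • (xb - x)) = f x := fun t ht =>
      le_antisymm (by simpa [hfxbx] using hqc x hxΓ xb hxbΓ t ht) (hxmin _ (hzS t ht))
    -- the derivative of f at xb is the zero functional
    have hfdxb : HasFDerivAt f (0 : EuclideanSpace ℝ (Fin n) →L[ℝ] ℝ) xb := by
      have h1 := (hdiff xb hxbΓ).hasGradientAt
      rw [hgxb] at h1
      simpa using h1.hasFDerivAt
    have hlo : (fun h : EuclideanSpace ℝ (Fin n) => f (xb + h) - f xb) =o[𝓝 0]
        fun h : EuclideanSpace ℝ (Fin n) => h := by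
      have := hasFDerivAt_iff_isLittleO_nhds_zero.mp hfdxb
      simpa using this
    have hΓev : ∀ᶠ h : EuclideanSpace ℝ (Fin n) in 𝓝 0, xb + h ∈ Γ := by
      have htend : Tendsto (fun h : EuclideanSpace ℝ (Fin n) => xb + h) (𝓝 0) (𝓝 xb) := by
        simpa using (by exact continuous_const.add continuous_id :
          Continuous (fun h : EuclideanSpace ℝ (Fin n) => xb + h)).tendsto 0
      exact htend.eventually (hΓo.eventually_mem hxbΓ)
    -- key : directional derivative in direction g is ≤ 0 along the open segment
    have key : ∀ t ∈ Ioc (0:ℝ) 1, (fderiv ℝ f (x + t • (xb - x))) g ≤ 0 := by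
      rintro t ⟨ht0, ht1⟩
      have htIcc : t ∈ Icc (0:ℝ) 1 := ⟨ht0.le, ht1⟩
      have hztΓ : x + t • (xb - x) ∈ Γ := hzΓ t htIcc
      set D := (fderiv ℝ f (x + t • (xb - x))) g with hD
      -- derivative of v ↦ f (z t + v • g) at 0 is D
      have hfzt : HasFDerivAt f (fderiv ℝ f (x + t • (xb - x)))
          (x + t • (xb - x) + (0:ℝ) • g) := by
        simpa using (hdiff _ hztΓ).hasFDerivAt
      have hline : HasDerivAt (fun v : ℝ => x + t • (xb - x) + v • g) g 0 := by
        simpa using ((hasDerivAt_id (0:ℝ)).smul_const g).const_add (x + t • (xb - x))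
      have hφ : HasDerivAt (fun v : ℝ => f (x + t • (xb - x) + v • g)) D 0 := by
        have := hfzt.comp_hasDerivAt 0 hline
        exact this
      have hslope : Tendsto
          (fun v : ℝ => (f (x + t • (xb - x) + v • g) - f (x + t • (xb - x))) / v)
          (𝓝[>] (0:ℝ)) (𝓝 D) := by
        have h2 := (hasDerivAt_iff_tendsto_slope.mp hφ).mono_left
          (nhdsWithin_mono 0 fun v (hv : v ∈ Ioi (0:ℝ)) => ne_of_gt hv)
        refine Tendsto.congr (fun v => ?_) h2
        simp [slope_def_field]
      have hDle : ∀ ε : ℝ, 0 < ε → D ≤ ε := by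
        intro ε hε
        have hε₂ : (0:ℝ) < ε * t / ‖g‖ := by positivity
        have hball := hlo.def hε₂
        have hmap : Tendsto (fun v : ℝ => (v / t) • g) (𝓝[>] (0:ℝ)) (𝓝 0) := by
          have hc : Continuous (fun v : ℝ => (v / t) • g) :=
            (continuous_id.div_const t).smul continuous_const
          have := hc.tendsto 0
          simp only [zero_div, zero_smul] at this
          exact this.mono_left nhdsWithin_le_nhds
        have hev := hmap.eventually (hball.and hΓev)
        have hbound : ∀ᶠ v in 𝓝[>] (0:ℝ),
            (f (x + t • (xb - x) + v • g) - f (x + t • (xb - x))) / v ≤ ε := by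
          filter_upwards [hev, self_mem_nhdsWithin] with v hv hv0
          have hv0' : (0:ℝ) < v := hv0
          obtain ⟨hv1, hv2⟩ := hv
          -- rewrite the combined point
          have hvt : t • ((v / t) • g) = v • g := by
            rw [smul_smul, mul_comm, div_mul_cancel₀ v (ne_of_gt ht0)]
          have harg : x + t • (xb + (v / t) • g - x) = x + t • (xb - x) + v • g := by
            rw [show xb + (v / t) • g - x = (xb - x) + (v / t) • g by abel, smul_add, hvt]
            abel
          have hqcv := hqc x hxΓ (xb + (v / t) • g) hv2 t htIcc
          rw [harg] at hqcv
          have hnorm : ‖(v / t) • g‖ = (v / t) * ‖g‖ := by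
            rw [norm_smul, Real.norm_eq_abs, abs_of_pos (by positivity)]
          have hub : f (xb + (v / t) • g) ≤ f x + ε * v := by
            have h3 : f (xb + (v / t) • g) - f xb ≤ (ε * t / ‖g‖) * ((v / t) * ‖g‖) := by
              calc f (xb + (v / t) • g) - f xb ≤ ‖f (xb + (v / t) • g) - f xb‖ :=
                    le_abs_self _
                _ ≤ (ε * t / ‖g‖) * ‖(v / t) • g‖ := hv1
                _ = (ε * t / ‖g‖) * ((v / t) * ‖g‖) := by rw [hnorm]
            have h4 : (ε * t / ‖g‖) * ((v / t) * ‖g‖) = ε * v := by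
              field_simp
            rw [h4] at h3
            linarith [hfxbx]
          have h5 : f (x + t • (xb - x) + v • g) ≤ f x + ε * v := by
            refine hqcv.trans ?_
            exact max_le (by nlinarith) hub
          rw [hzc t htIcc]
          rw [div_le_iff₀ hv0']
          nlinarith
        exact le_of_tendsto hslope hbound
      refine le_of_forall_pos_le_add fun ε hε => ?_
      simpa using hDle ε hε
    -- continuity of the directional derivative along the segment, towards t = 0
    have hfc : ContinuousOn (fun p => (fderiv ℝ f p) g) Γ := by
      have h1 := hC1.continuousOn_fderiv_of_isOpen hΓo le_rfl
      exact (ContinuousLinearMap.apply ℝ ℝ g).continuous.comp_continuousOn h1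
    have hzcont : Tendsto (fun t : ℝ => x + t • (xb - x)) (𝓝[>] (0:ℝ)) (𝓝 x) := by
      have hc : Continuous (fun t : ℝ => x + t • (xb - x)) :=
        continuous_const.add (continuous_id.smul continuous_const)
      have := hc.tendsto 0
      simp only [zero_smul, add_zero] at this
      exact this.mono_left nhdsWithin_le_nhds
    have hMcont : Tendsto (fun t : ℝ => (fderiv ℝ f (x + t • (xb - x))) g)
        (𝓝[>] (0:ℝ)) (𝓝 ((fderiv ℝ f x) g)) :=
      ((hfc.continuousAt (hΓo.mem_nhds hxΓ)).tendsto).comp hzcont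
    have hle : (fderiv ℝ f x) g ≤ 0 := by
      refine le_of_tendsto hMcont ?_
      filter_upwards [Ioc_mem_nhdsGT_of_mem (Set.left_mem_Ico.mpr zero_lt_one)] with t ht
      exact key t ht
    have hfdx : (fderiv ℝ f x) g = ‖g‖ ^ 2 := by
      have h1 := (hdiff x hxΓ).hasGradientAt.hasFDerivAt.fderiv
      rw [h1, toDual_apply_apply, ← hg0, real_inner_self_eq_norm_sq]
    rw [hfdx] at hle
    nlinarith
  · rintro ⟨hxS, hgx⟩
    refine ⟨hxS, ?_⟩
    by_contra hnot
    push_neg at hnot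
    obtain ⟨y, hyS, hylt⟩ := hnot
    have hxnot : x ∉ Sbar := by
      rw [hSbar]
      rintro ⟨-, hmin⟩
      exact absurd (hmin y hyS) (not_le.mpr hylt)
    have hlt : f xb < f x := lt_of_le_of_lt (hxbmin y hyS) hylt
    have := hpc x hxS hxnot xb hxbΓ hlt
    rw [hgx] at this
    simp at this
end

section
/- Let Γ ⊆ ℝⁿ be open and convex, S ⊆ Γ convex, f : Γ → ℝ continuously differentiable and quasiconvex. Let x̄ be a global minimizer of f on S with ∇f(x̄) ≠ 0. Then S̄ = {x ∈ S | ⟨∇f(x), x̄ − x⟩ = 0 and ∇f(x) ≠ 0}. -/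
open Set Metric Filter Topology

section aux

variable {n : ℕ}

private lemma line_deriv {f : EuclideanSpace ℝ (Fin n) → ℝ}
    {G p v : EuclideanSpace ℝ (Fin n)} {t : ℝ}
    (hf : HasGradientAt f G (p + t • v)) :
    HasDerivAt (fun s : ℝ => f (p + s • v)) (inner ℝ G v : ℝ) t := by
  have hc : HasDerivAt (fun s : ℝ => p + s • v) v t := by
    simpa using ((hasDerivAt_id t).smul_const v).const_add p
  have h2 := hf.hasFDerivAt.comp_hasDerivAt t hc
  simpa [InnerProductSpace.toDual_apply_apply, Function.comp_def] using h2

private lemma slope_le_deriv {h : ℝ → ℝ} {d K : ℝ}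
    (hd : HasDerivAt h d 0) (hle : ∀ᶠ t in 𝓝[>] (0:ℝ), K ≤ (h t - h 0) / t) : K ≤ d := by
  have hs : Tendsto (slope h 0) (𝓝[≠] (0:ℝ)) (𝓝 d) := hasDerivAt_iff_tendsto_slope.mp hd
  have hs' : Tendsto (slope h 0) (𝓝[>] (0:ℝ)) (𝓝 d) :=
    hs.mono_left (nhdsWithin_mono _ (fun t ht => ne_of_gt ht))
  refine ge_of_tendsto hs' ?_
  refine hle.mono (fun t ht => ?_)
  simpa [slope_def_field, div_eq_inv_mul] using ht

private lemma deriv_le_slope {h : ℝ → ℝ} {d K : ℝ}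
    (hd : HasDerivAt h d 0) (hle : ∀ᶠ t in 𝓝[>] (0:ℝ), (h t - h 0) / t ≤ K) : d ≤ K := by
  have hs : Tendsto (slope h 0) (𝓝[≠] (0:ℝ)) (𝓝 d) := hasDerivAt_iff_tendsto_slope.mp hd
  have hs' : Tendsto (slope h 0) (𝓝[>] (0:ℝ)) (𝓝 d) :=
    hs.mono_left (nhdsWithin_mono _ (fun t ht => ne_of_gt ht))
  refine le_of_tendsto hs' ?_
  refine hle.mono (fun t ht => ?_)
  simpa [slope_def_field, div_eq_inv_mul] using ht

end aux

section aux2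
variable {n : ℕ} {Γ : Set (EuclideanSpace ℝ (Fin n))} {f : EuclideanSpace ℝ (Fin n) → ℝ}

private lemma grad_at (hΓo : IsOpen Γ) (hC1 : ContDiffOn ℝ 1 f Γ)
    {z : EuclideanSpace ℝ (Fin n)} (hz : z ∈ Γ) :
    HasGradientAt f (gradient f z) z := by
  have : DifferentiableAt ℝ f z :=
    ((hC1.differentiableOn one_ne_zero) z hz).differentiableAt (hΓo.mem_nhds hz)
  exact this.hasGradientAt

private lemma lemmaB (hΓo : IsOpen Γ) (hC1 : ContDiffOn ℝ 1 f Γ)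
    (hqc : ∀ x ∈ Γ, ∀ y ∈ Γ, ∀ t ∈ Set.Icc (0:ℝ) 1,
        f (x + t • (y - x)) ≤ max (f x) (f y))
    {a b : EuclideanSpace ℝ (Fin n)} (ha : a ∈ Γ) (hb : b ∈ Γ) (hab : f a ≤ f b) :
    (inner ℝ (gradient f b) (a - b) : ℝ) ≤ 0 := by
  have hgrad : HasGradientAt f (gradient f b) b := grad_at hΓo hC1 hb
  have hgrad' : HasGradientAt f (gradient f b) (b + (0:ℝ) • (a - b)) := by
    rw [zero_smul, add_zero]; exact hgrad
  have hd : HasDerivAt (fun s : ℝ => f (b + s • (a - b))) (inner ℝ (gradient f b) (a - b) : ℝ) 0 :=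
    line_deriv hgrad'
  refine deriv_le_slope hd ?_
  have hIoo : Ioo (0:ℝ) 1 ∈ 𝓝[>] (0:ℝ) := Ioo_mem_nhdsGT_of_mem ⟨le_refl 0, zero_lt_one⟩
  filter_upwards [hIoo] with t ht
  have hq := hqc b hb a ha t ⟨ht.1.le, ht.2.le⟩
  have h0 : f (b + (0:ℝ) • (a - b)) = f b := by rw [zero_smul, add_zero]
  rw [h0]
  have hle : f (b + t • (a - b)) - f b ≤ 0 := by
    have hmx : f b ⊔ f a = f b := max_eq_left hab
    rw [hmx] at hq; linarith
  exact div_nonpos_of_nonpos_of_nonneg hle ht.1.le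

private lemma lemmaA (hΓo : IsOpen Γ) (hC1 : ContDiffOn ℝ 1 f Γ)
    (hqc : ∀ x ∈ Γ, ∀ y ∈ Γ, ∀ t ∈ Set.Icc (0:ℝ) 1,
        f (x + t • (y - x)) ≤ max (f x) (f y))
    {a b : EuclideanSpace ℝ (Fin n)} (ha : a ∈ Γ) (hb : b ∈ Γ) (hab : f a < f b)
    (hG : gradient f b ≠ 0) :
    (inner ℝ (gradient f b) (a - b) : ℝ) < 0 := by
  set G := gradient f b with hGdef
  -- find δ > 0 with a + δ • G ∈ Γ and f (a + δ • G) ≤ f b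
  have hline : ContinuousAt (fun δ : ℝ => a + δ • G) 0 := by
    exact (continuous_const.add (continuous_id.smul continuous_const)).continuousAt
  have hfa : ContinuousAt f a :=
    ((hC1.continuousOn) a ha).continuousAt (hΓo.mem_nhds ha)
  have hcomp : ContinuousAt (fun δ : ℝ => f (a + δ • G)) 0 := by
    have : (fun δ : ℝ => f (a + δ • G)) = f ∘ (fun δ : ℝ => a + δ • G) := rfl
    rw [this]
    apply ContinuousAt.comp _ hline
    simpa using hfa
  have hev1 : ∀ᶠ δ in 𝓝 (0:ℝ), a + δ • G ∈ Γ := by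
    have := hline.preimage_mem_nhds (by simpa using hΓo.mem_nhds ha)
    exact this
  have hev2 : ∀ᶠ δ in 𝓝 (0:ℝ), f (a + δ • G) < f b := by
    have h0 : (fun δ : ℝ => f (a + δ • G)) 0 = f a := by simp
    have := hcomp.eventually_lt_const (by rw [h0]; exact hab)
    exact this
  have hev : ∀ᶠ δ in 𝓝[>] (0:ℝ), (a + δ • G ∈ Γ ∧ f (a + δ • G) < f b) ∧ 0 < δ := by
    refine Filter.Eventually.and ?_ (eventually_mem_nhdsWithin)
    exact (hev1.and hev2).filter_mono nhdsWithin_le_nhds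
  obtain ⟨δ, ⟨hmem, hlt⟩, hδ⟩ := hev.exists
  have hB := lemmaB hΓo hC1 hqc hmem hb hlt.le
  have hexp : (inner ℝ G (a + δ • G - b) : ℝ)
      = (inner ℝ G (a - b) : ℝ) + δ * (inner ℝ G G : ℝ) := by
    have : a + δ • G - b = (a - b) + δ • G := by abel
    rw [this, inner_add_right, real_inner_smul_right]
  rw [hexp] at hB
  have hpos : (0:ℝ) < inner ℝ G G := by
    rw [real_inner_self_eq_norm_sq]
    have : 0 < ‖G‖ := norm_pos_iff.mpr hG
    positivity
  nlinarith
end aux2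
set_option maxHeartbeats 1000000 in
theorem stmt_9 {n : ℕ} (Γ S : Set (EuclideanSpace ℝ (Fin n)))
    (hΓo : IsOpen Γ) (hΓ : Convex ℝ Γ) (hS : Convex ℝ S) (hSΓ : S ⊆ Γ)
    (f : EuclideanSpace ℝ (Fin n) → ℝ)
    (hC1 : ContDiffOn ℝ 1 f Γ)
    (hqc : ∀ x ∈ Γ, ∀ y ∈ Γ, ∀ t ∈ Set.Icc (0:ℝ) 1,
        f (x + t • (y - x)) ≤ max (f x) (f y))
    (Sbar : Set (EuclideanSpace ℝ (Fin n)))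
    (hSbar : Sbar = {x ∈ S | ∀ y ∈ S, f x ≤ f y})
    (xb : EuclideanSpace ℝ (Fin n)) (hxb : xb ∈ Sbar)
    (hgxb : gradient f xb ≠ 0) :
    Sbar = {x ∈ S | (inner ℝ (gradient f x) (xb - x) : ℝ) = 0 ∧ gradient f x ≠ 0} := by
  have hxb' := hxb
  rw [hSbar] at hxb'
  obtain ⟨hxbS, hxbmin⟩ := hxb'
  have hxbΓ : xb ∈ Γ := hSΓ hxbS
  rw [hSbar]
  ext x
  simp only [Set.mem_setOf_eq]
  constructor
  · rintro ⟨hxS, hxmin⟩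
    have hxΓ : x ∈ Γ := hSΓ hxS
    have hfeq : f x = f xb := le_antisymm (hxmin xb hxbS) (hxbmin x hxS)
    have hseg : ∀ t ∈ Set.Icc (0:ℝ) 1, x + t • (xb - x) ∈ S ∧ f (x + t • (xb - x)) = f x := by
      intro t ht
      have hmem : x + t • (xb - x) ∈ S := by
        have heq : x + t • (xb - x) = (1 - t) • x + t • xb := by module
        rw [heq]
        exact hS hxS hxbS (by linarith [ht.2]) ht.1 (by ring)
      refine ⟨hmem, le_antisymm ?_ (hxmin _ hmem)⟩
      have hq := hqc x hxΓ xb hxbΓ t ht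
      rw [← hfeq, max_self] at hq
      exact hq
    have hseg2 : ∀ t ∈ Set.Icc (0:ℝ) 1, xb + t • (x - xb) ∈ S ∧ f (xb + t • (x - xb)) = f xb := by
      intro t ht
      have hmem : xb + t • (x - xb) ∈ S := by
        have heq : xb + t • (x - xb) = (1 - t) • xb + t • x := by module
        rw [heq]
        exact hS hxbS hxS (by linarith [ht.2]) ht.1 (by ring)
      refine ⟨hmem, le_antisymm ?_ (hxbmin _ hmem)⟩
      have hq := hqc xb hxbΓ x hxΓ t ht
      rw [hfeq, max_self] at hq
      exact hq
    refine ⟨hxS, ?_, ?_⟩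
    · -- inner product is zero
      have hgrad' : HasGradientAt f (gradient f x) (x + (0:ℝ) • (xb - x)) := by
        rw [zero_smul, add_zero]; exact grad_at hΓo hC1 hxΓ
      have hd := line_deriv hgrad'
      have hIoo : Set.Ioo (0:ℝ) 1 ∈ 𝓝[>] (0:ℝ) :=
        Ioo_mem_nhdsGT_of_mem ⟨le_refl 0, zero_lt_one⟩
      have hz : ∀ᶠ t in 𝓝[>] (0:ℝ),
          (f (x + t • (xb - x)) - f (x + (0:ℝ) • (xb - x))) / t = 0 := by
        filter_upwards [hIoo] with t ht
        rw [(hseg t ⟨ht.1.le, ht.2.le⟩).2]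
        rw [zero_smul, add_zero]
        simp
      have h1 : (inner ℝ (gradient f x) (xb - x) : ℝ) ≤ 0 :=
        deriv_le_slope hd (hz.mono fun t ht => le_of_eq ht)
      have h2 : (0:ℝ) ≤ inner ℝ (gradient f x) (xb - x) :=
        slope_le_deriv hd (hz.mono fun t ht => ge_of_eq ht)
      linarith
    · -- gradient nonzero
      intro hG0
      set g := gradient f xb with hgdef
      have hggpos : (0:ℝ) < inner ℝ g g := by
        rw [real_inner_self_eq_norm_sq]
        have : 0 < ‖g‖ := norm_pos_iff.mpr hgxb
        positivity
      set gg : ℝ := inner ℝ g g with hggdef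
      -- continuity of gradient near xb
      have hfd : ContinuousOn (fderiv ℝ f) Γ := hC1.continuousOn_fderiv_of_isOpen hΓo le_rfl
      have hgc : ContinuousOn (fun z => gradient f z) Γ := by
        exact (InnerProductSpace.toDual ℝ
          (EuclideanSpace ℝ (Fin n))).symm.continuous.comp_continuousOn hfd
      have hic : ContinuousAt (fun z => (inner ℝ (gradient f z) g : ℝ)) xb := by
        have h1 : ContinuousAt (fun z => gradient f z) xb :=
          (hgc xb hxbΓ).continuousAt (hΓo.mem_nhds hxbΓ)
        exact h1.inner continuousAt_const
      have hev : ∀ᶠ z in 𝓝 xb, gg / 2 < (inner ℝ (gradient f z) g : ℝ) := by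
        refine hic.eventually (eventually_gt_nhds ?_)
        linarith
      obtain ⟨δ, hδpos, hball⟩ := Metric.mem_nhds_iff.mp
        (Filter.inter_mem hev (hΓo.mem_nhds hxbΓ))
      set N : ℝ := ‖x - xb‖ with hNdef
      have hN0 : 0 ≤ N := norm_nonneg _
      set θ : ℝ := min 1 (δ / (2 * (N + 1))) with hθdef
      have hθpos : 0 < θ := lt_min zero_lt_one (by positivity)
      have hθ1 : θ ≤ 1 := min_le_left _ _
      have hθd : θ * N ≤ δ / 2 := by
        have h1 : θ ≤ δ / (2 * (N + 1)) := min_le_right _ _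
        have h2 : θ * N ≤ δ / (2 * (N + 1)) * N := by
          apply mul_le_mul_of_nonneg_right h1 hN0
        have h3 : δ / (2 * (N + 1)) * N ≤ δ / 2 := by
          rw [div_mul_eq_mul_div, div_le_div_iff₀ (by positivity) (by norm_num)]
          nlinarith
        linarith
      set zθ := xb + θ • (x - xb) with hzθdef
      obtain ⟨hzθS, hzθf⟩ := hseg2 θ ⟨hθpos.le, hθ1⟩
      -- derivative of ψ ρ = f (x + ρ • g) at 0 is 0
      have hgrad0 : HasGradientAt f (gradient f x) (x + (0:ℝ) • g) := by
        rw [zero_smul, add_zero]; exact grad_at hΓo hC1 hxΓ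
      have hψd : HasDerivAt (fun ρ : ℝ => f (x + ρ • g)) 0 0 := by
        have := line_deriv hgrad0
        rw [hG0] at this
        simpa using this
      -- eventual slope lower bound
      set ρ₀ : ℝ := δ / (2 * (θ * ‖g‖ + 1)) with hρ₀def
      have hρ₀pos : 0 < ρ₀ := by positivity
      have hev1 : ∀ᶠ ρ in 𝓝 (0:ℝ), x + ρ • g ∈ Γ := by
        have hline : ContinuousAt (fun ρ : ℝ => x + ρ • g) 0 :=
          (continuous_const.add (continuous_id.smul continuous_const)).continuousAt
        have := hline.preimage_mem_nhds (by simpa using hΓo.mem_nhds hxΓ)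
        exact this
      have hIoo2 : Set.Ioo (0:ℝ) ρ₀ ∈ 𝓝[>] (0:ℝ) :=
        Ioo_mem_nhdsGT_of_mem ⟨le_refl 0, hρ₀pos⟩
      have hkey : ∀ᶠ ρ in 𝓝[>] (0:ℝ),
          θ * gg / 2 ≤ (f (x + ρ • g) - f (x + (0:ℝ) • g)) / ρ := by
        filter_upwards [hev1.filter_mono nhdsWithin_le_nhds, hIoo2] with ρ hρΓ hρmem
        have hρpos : 0 < ρ := hρmem.1
        have hρlt : ρ < ρ₀ := hρmem.2
        have hsmall : θ * ρ * ‖g‖ < δ / 2 := by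
          have hg0 : 0 ≤ ‖g‖ := norm_nonneg _
          have h1 : θ * ρ * ‖g‖ ≤ ρ * (θ * ‖g‖ + 1) := by nlinarith
          have h2 : ρ * (θ * ‖g‖ + 1) < ρ₀ * (θ * ‖g‖ + 1) :=
            mul_lt_mul_of_pos_right hρlt (by positivity)
          have h3 : ρ₀ * (θ * ‖g‖ + 1) = δ / 2 := by
            rw [hρ₀def]; field_simp
          linarith
        have htube : ∀ s ∈ Set.Icc (0:ℝ) (θ * ρ), zθ + s • g ∈ Metric.ball xb δ := by
          intro s hs
          have heq : zθ + s • g - xb = θ • (x - xb) + s • g := by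
            rw [hzθdef]; abel
          rw [Metric.mem_ball, dist_eq_norm, heq]
          calc ‖θ • (x - xb) + s • g‖ ≤ ‖θ • (x - xb)‖ + ‖s • g‖ := norm_add_le _ _
            _ = θ * N + s * ‖g‖ := by
                rw [norm_smul, norm_smul, Real.norm_of_nonneg hθpos.le,
                  Real.norm_of_nonneg hs.1, hNdef]
            _ ≤ δ / 2 + θ * ρ * ‖g‖ := by
                have : s * ‖g‖ ≤ θ * ρ * ‖g‖ :=
                  mul_le_mul_of_nonneg_right hs.2 (norm_nonneg _)
                linarith
            _ < δ := by linarith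
        have htubeΓ : ∀ s ∈ Set.Icc (0:ℝ) (θ * ρ), zθ + s • g ∈ Γ :=
          fun s hs => (hball (htube s hs)).2
        have hφd : ∀ s ∈ Set.Icc (0:ℝ) (θ * ρ),
            HasDerivAt (fun u : ℝ => f (zθ + u • g))
              (inner ℝ (gradient f (zθ + s • g)) g : ℝ) s :=
          fun s hs => line_deriv (grad_at hΓo hC1 (htubeΓ s hs))
        have hθρpos : 0 < θ * ρ := by positivity
        obtain ⟨ξ, hξ, hslope⟩ := exists_hasDerivAt_eq_slope
          (fun u : ℝ => f (zθ + u • g))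
          (fun s => (inner ℝ (gradient f (zθ + s • g)) g : ℝ)) hθρpos
          (fun s hs => ((hφd s hs).continuousAt).continuousWithinAt)
          (fun s hs => hφd s (Set.Ioo_subset_Icc_self hs))
        have hξball : zθ + ξ • g ∈ Metric.ball xb δ :=
          htube ξ (Set.Ioo_subset_Icc_self hξ)
        have hξlow : gg / 2 < (inner ℝ (gradient f (zθ + ξ • g)) g : ℝ) :=
          (hball hξball).1
        have hφ0 : f (zθ + (0:ℝ) • g) = f xb := by rw [zero_smul, add_zero]; exact hzθf
        -- f M ≥ f xb + (θ ρ) * gg / 2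
        have hM : f xb + θ * ρ * (gg / 2) < f (zθ + (θ * ρ) • g) := by
          rw [hslope, hφ0] at hξlow
          rw [sub_zero] at hξlow
          nlinarith [(lt_div_iff₀ hθρpos).mp hξlow]
        -- quasiconvexity
        set p := x + ρ • g with hpdef
        have hMeq : xb + θ • (p - xb) = zθ + (θ * ρ) • g := by
          rw [hpdef, hzθdef]; module
        have hq := hqc xb hxbΓ p hρΓ θ ⟨hθpos.le, hθ1⟩
        rw [hMeq] at hq
        have hfp : f (zθ + (θ * ρ) • g) ≤ f p := by
          rcases le_max_iff.mp hq with h | h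
          · exfalso; nlinarith
          · exact h
        have hx0 : f (x + (0:ℝ) • g) = f xb := by rw [zero_smul, add_zero]; exact hfeq
        rw [hx0, le_div_iff₀ hρpos]
        nlinarith
      have hfinal := slope_le_deriv hψd hkey
      nlinarith
  · rintro ⟨hxS, hinner, hGne⟩
    refine ⟨hxS, fun y hy => ?_⟩
    have h1 : f x ≤ f xb := by
      by_contra hcon
      push_neg at hcon
      have := lemmaA hΓo hC1 hqc hxbΓ (hSΓ hxS) hcon hGne
      rw [hinner] at this
      exact lt_irrefl 0 this
    exact h1.trans (hxbmin y hy)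
end

section
/- Let Γ ⊆ ℝⁿ be open and convex, S ⊆ Γ convex, f : Γ → ℝ continuously differentiable and quasiconvex. Let x̄ be a global minimizer of f on S with ∇f(x̄) ≠ 0. Then S̄ = {x ∈ S | ⟨∇f(x), x̄ − x⟩ ≥ 0 and ∇f(x) ≠ 0}. -/
open Filter Set Topology

section helpers

variable {F : Type*} [NormedAddCommGroup F] [InnerProductSpace ℝ F] [CompleteSpace F]

lemma helper_hasDerivAt_line {f : F → ℝ} {p : F} (hd : DifferentiableAt ℝ f p) (v : F) :
    HasDerivAt (fun ε : ℝ => f (p + ε • v)) (inner ℝ (gradient f p) v : ℝ) 0 := by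
  have h1 : HasGradientAt f (gradient f p) p := hd.hasGradientAt
  have h2 : HasFDerivAt f ((InnerProductSpace.toDual ℝ F) (gradient f p)) p :=
    hasGradientAt_iff_hasFDerivAt.mp h1
  have h3 : HasDerivAt (fun ε : ℝ => p + ε • v) v 0 := by
    simpa using ((hasDerivAt_id (0:ℝ)).smul_const v).const_add p
  have h2' : HasFDerivAt f ((InnerProductSpace.toDual ℝ F) (gradient f p))
      ((fun ε : ℝ => p + ε • v) 0) := by simpa using h2
  have := h2'.comp_hasDerivAt 0 h3
  rw [InnerProductSpace.toDual_apply_apply] at this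
  exact this

lemma helper_tendsto_slope {g : ℝ → ℝ} {D : ℝ} (hg : HasDerivAt g D 0) (hg0 : g 0 = 0) :
    Tendsto (fun ε => g ε / ε) (𝓝[>] (0:ℝ)) (𝓝 D) := by
  have h := hasDerivAt_iff_tendsto_slope.mp hg
  have h2 : Tendsto (slope g 0) (𝓝[>] (0:ℝ)) (𝓝 D) :=
    h.mono_left (nhdsWithin_mono 0 (fun x hx => ne_of_gt hx))
  refine h2.congr (fun ε => ?_)
  simp [slope, hg0, div_eq_inv_mul]

lemma helper_deriv_le {g h : ℝ → ℝ} {D E : ℝ} (hg : HasDerivAt g D 0) (hg0 : g 0 = 0)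
    (hh : Tendsto (fun ε => h ε / ε) (𝓝[>] (0:ℝ)) (𝓝 E))
    (hle : ∀ᶠ ε in 𝓝[>] (0:ℝ), g ε ≤ h ε) : D ≤ E := by
  refine le_of_tendsto_of_tendsto (helper_tendsto_slope hg hg0) hh ?_
  filter_upwards [hle, self_mem_nhdsWithin] with ε h1 h2
  exact (div_le_div_iff_of_pos_right (mem_Ioi.mp h2)).mpr h1

lemma helper_deriv_nonpos {f : F → ℝ} {p q : F} (hd : DifferentiableAt ℝ f p)
    (hle : ∀ t ∈ Icc (0:ℝ) 1, f (p + t • (q - p)) ≤ f p) :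
    (inner ℝ (gradient f p) (q - p) : ℝ) ≤ 0 := by
  have hline := (helper_hasDerivAt_line hd (q - p)).sub_const (f p)
  refine helper_deriv_le hline (by simp) (h := fun _ => (0:ℝ))
    (by simpa using (tendsto_const_nhds : Tendsto (fun _ : ℝ => (0:ℝ)) _ _)) ?_
  filter_upwards [Ioo_mem_nhdsGT_of_mem (Set.left_mem_Ico.mpr one_pos)] with ε hε
  exact sub_nonpos.mpr (hle ε ⟨le_of_lt hε.1, le_of_lt hε.2⟩)

end helpers

theorem stmt_10 {n : ℕ} (Γ S : Set (EuclideanSpace ℝ (Fin n)))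
    (hΓo : IsOpen Γ) (hΓ : Convex ℝ Γ) (hS : Convex ℝ S) (hSΓ : S ⊆ Γ)
    (f : EuclideanSpace ℝ (Fin n) → ℝ)
    (hC1 : ContDiffOn ℝ 1 f Γ)
    (hqc : ∀ x ∈ Γ, ∀ y ∈ Γ, ∀ t ∈ Set.Icc (0:ℝ) 1,
        f (x + t • (y - x)) ≤ max (f x) (f y))
    (Sbar : Set (EuclideanSpace ℝ (Fin n)))
    (hSbar : Sbar = {x ∈ S | ∀ y ∈ S, f x ≤ f y})
    (xb : EuclideanSpace ℝ (Fin n)) (hxb : xb ∈ Sbar)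
    (hgxb : gradient f xb ≠ 0) :
    Sbar = {x ∈ S | (inner ℝ (gradient f x) (xb - x) : ℝ) ≥ 0 ∧ gradient f x ≠ 0} := by
  have hdiff : ∀ p ∈ Γ, DifferentiableAt ℝ f p := fun p hp =>
    ((hC1.differentiableOn one_ne_zero).differentiableAt (hΓo.mem_nhds hp))
  rw [hSbar] at hxb
  obtain ⟨hxbS, hxbmin⟩ := hxb
  have hxbΓ : xb ∈ Γ := hSΓ hxbS
  have hgradcont : ContinuousOn (fun p => gradient f p) Γ := by
    have h1 : ContinuousOn (fderiv ℝ f) Γ := hC1.continuousOn_fderiv_of_isOpen hΓo le_rfl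
    have h2 : Continuous ((InnerProductSpace.toDual ℝ (EuclideanSpace ℝ (Fin n))).symm :
        (EuclideanSpace ℝ (Fin n) →L[ℝ] ℝ) → EuclideanSpace ℝ (Fin n)) :=
      (InnerProductSpace.toDual ℝ (EuclideanSpace ℝ (Fin n))).symm.continuous
    exact h2.comp_continuousOn h1
  ext x
  rw [hSbar]
  simp only [Set.mem_setOf_eq]
  constructor
  · rintro ⟨hxS, hxmin⟩
    have hxΓ : x ∈ Γ := hSΓ hxS
    have fxc : f x = f xb := le_antisymm (hxmin xb hxbS) (hxbmin x hxS)
    set y : ℝ → EuclideanSpace ℝ (Fin n) := fun t => x + t • (xb - x) with hy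
    have hyS : ∀ t ∈ Icc (0:ℝ) 1, y t ∈ S := fun t ht => hS.add_smul_sub_mem hxS hxbS ht
    have hyΓ : ∀ t ∈ Icc (0:ℝ) 1, y t ∈ Γ := fun t ht => hSΓ (hyS t ht)
    have hyc : ∀ t ∈ Icc (0:ℝ) 1, f (y t) = f xb := by
      intro t ht
      refine le_antisymm ?_ (hxbmin _ (hyS t ht))
      have := hqc x hxΓ xb hxbΓ t ht
      rwa [fxc, max_self] at this
    refine ⟨hxS, ?_, ?_⟩
    · -- first-order optimality: inner (gradient f x) (xb - x) ≥ 0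
      have hline := ((helper_hasDerivAt_line (hdiff x hxΓ) (xb - x)).sub_const (f x)).neg
      have hev : ∀ᶠ ε in 𝓝[>] (0:ℝ),
          -(f (x + ε • (xb - x)) - f x) ≤ (fun _ : ℝ => (0:ℝ)) ε := by
        filter_upwards [Ioo_mem_nhdsGT_of_mem (Set.left_mem_Ico.mpr one_pos)] with ε hε
        have h1 := hxmin (y ε) (hyS ε ⟨le_of_lt hε.1, le_of_lt hε.2⟩)
        simp only [hy] at h1
        simp only [neg_sub, sub_nonpos, tsub_le_iff_right]
        linarith
      have hzero : Tendsto (fun ε : ℝ => (0:ℝ) / ε) (𝓝[>] (0:ℝ)) (𝓝 0) := by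
        simpa using (tendsto_const_nhds :
          Tendsto (fun _ : ℝ => (0:ℝ)) (𝓝[>] (0:ℝ)) (𝓝 0))
      have hD := helper_deriv_le hline (by simp) (hh := hzero) hev
      linarith [hD]
    · -- gradient nonzero
      intro h0
      set u := gradient f xb with hu
      set ψ : ℝ → ℝ := fun t => (inner ℝ (gradient f (y t)) u : ℝ) with hψ
      have hycont : Continuous y := by
        rw [hy]; exact continuous_const.add (continuous_id.smul continuous_const)
      have hψcont : ContinuousOn ψ (Icc 0 1) := by
        rw [hψ]
        have hcomp : ContinuousOn (fun t => gradient f (y t)) (Icc (0:ℝ) 1) := by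
          have := ContinuousOn.comp hgradcont hycont.continuousOn
            (fun t (ht : t ∈ Icc (0:ℝ) 1) => hyΓ t ht)
          exact this
        exact hcomp.inner continuousOn_const
      have hy0 : y 0 = x := by simp [hy]
      have hy1 : y 1 = xb := by simp [hy]
      have hψ0 : ψ 0 = 0 := by simp only [hψ, hy0, h0, inner_zero_left]
      have hψ1 : 0 < ψ 1 := by
        simp only [hψ, hy1, ← hu, real_inner_self_eq_norm_sq]
        exact pow_pos (norm_pos_iff.mpr hgxb) 2
      set T : Set ℝ := {t ∈ Icc (0:ℝ) 1 | ψ t ≤ 0} with hT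
      have hTne : (0:ℝ) ∈ T := ⟨⟨le_refl _, zero_le_one⟩, le_of_eq hψ0⟩
      have hTclosed : IsClosed T := by
        have heq : T = Icc (0:ℝ) 1 ∩ ψ ⁻¹' (Iic 0) := by
          ext t; simp [hT]
        rw [heq]
        exact hψcont.preimage_isClosed_of_isClosed isClosed_Icc isClosed_Iic
      have hTbdd : BddAbove T := ⟨1, fun t ht => ht.1.2⟩
      set τ := sSup T with hτ
      have hτT : τ ∈ T := hTclosed.csSup_mem ⟨0, hTne⟩ hTbdd
      have hτIcc : τ ∈ Icc (0:ℝ) 1 := hτT.1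
      have hτ1 : τ < 1 := by
        rcases lt_or_eq_of_le hτIcc.2 with h | h
        · exact h
        · rw [h] at hτT; linarith [hτT.2, hψ1]
      set m := (τ + 1) / 2 with hm
      have hmIcc : m ∈ Icc (0:ℝ) 1 := ⟨by rw [hm]; linarith [hτIcc.1], by rw [hm]; linarith⟩
      have hmgt : τ < m := by rw [hm]; linarith
      have hψm : 0 < ψ m := by
        by_contra h
        push_neg at h
        exact absurd (le_csSup hTbdd ⟨hmIcc, h⟩) (not_le.mpr hmgt)
      -- key harmonic-type inequality : ψ m / 2 ≤ max (ψ τ) 0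
      have hkey : ψ m / 2 ≤ max (ψ τ) 0 := by
        set α : ℝ → ℝ := fun ε => f (y τ + ε • u) - f xb with hα
        have hαderiv : HasDerivAt α (ψ τ) 0 := by
          have := (helper_hasDerivAt_line (hdiff _ (hyΓ τ hτIcc)) u).sub_const (f xb)
          simpa [hα, hψ] using this
        have hα0 : α 0 = 0 := by simp [hα, hyc τ hτIcc]
        set μ : ℝ → ℝ := fun ε => f (y m + ε • ((1/2 : ℝ) • u)) - f xb with hμ
        have hμderiv : HasDerivAt μ (ψ m / 2) 0 := by
          have h1 := (helper_hasDerivAt_line (hdiff _ (hyΓ m hmIcc)) ((1/2 : ℝ) • u)).sub_const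
            (f xb)
          have heq : (inner ℝ (gradient f (y m)) ((1/2 : ℝ) • u) : ℝ) = ψ m / 2 := by
            rw [real_inner_smul_right]
            simp [hψ]
            ring
          rw [heq] at h1
          exact h1
        have hμ0 : μ 0 = 0 := by simp [hμ, hyc m hmIcc]
        have hev : ∀ᶠ ε in 𝓝[>] (0:ℝ), μ ε ≤ max (α ε) 0 := by
          have hcont : ContinuousAt (fun ε : ℝ => y τ + ε • u) 0 :=
            (continuous_const.add (continuous_id.smul continuous_const)).continuousAt
          have hnb : {ε : ℝ | y τ + ε • u ∈ Γ} ∈ 𝓝 (0:ℝ) := by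
            have := hcont.preimage_mem_nhds (hΓo.mem_nhds (by simpa using hyΓ τ hτIcc))
            exact this
          filter_upwards [nhdsWithin_le_nhds hnb] with ε hε
          have hq := hqc _ hε xb hxbΓ (1/2) (by norm_num)
          have hpt : (y τ + ε • u) + (1/2 : ℝ) • (xb - (y τ + ε • u))
              = y m + ε • ((1/2 : ℝ) • u) := by
            simp only [hy, hm]
            module
          rw [hpt] at hq
          have h2 : max (α ε) 0 + f xb = max (f (y τ + ε • u)) (f xb) := by
            rw [← max_add_add_right]
            simp [hα]
          simp only [hμ]
          rw [sub_le_iff_le_add, h2]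
          exact hq
        have htend : Tendsto (fun ε => max (α ε) 0 / ε) (𝓝[>] (0:ℝ)) (𝓝 (max (ψ τ) 0)) := by
          have h1 : Tendsto (fun ε => max (α ε / ε) 0) (𝓝[>] (0:ℝ)) (𝓝 (max (ψ τ) 0)) :=
            (helper_tendsto_slope hαderiv hα0).max tendsto_const_nhds
          refine Tendsto.congr' ?_ h1
          filter_upwards [self_mem_nhdsWithin] with ε hε
          rw [show max (α ε / ε) 0 = max (α ε / ε) (0 / ε) by simp]
          rw [max_div_div_right (le_of_lt (mem_Ioi.mp hε))]
        exact helper_deriv_le hμderiv hμ0 htend hev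
      rw [max_eq_right hτT.2] at hkey
      linarith
  · rintro ⟨hxS, hge, hgx⟩
    have hxΓ : x ∈ Γ := hSΓ hxS
    refine ⟨hxS, fun z hz => ?_⟩
    have hfx : f x ≤ f xb := by
      by_contra hlt
      push_neg at hlt
      have hcontf : ContinuousAt f xb := (hdiff xb hxbΓ).continuousAt
      have hnb : {w | w ∈ Γ ∧ f w < f x} ∈ 𝓝 xb := by
        refine Filter.inter_mem (hΓo.mem_nhds hxbΓ) ?_
        exact hcontf.preimage_mem_nhds (Iio_mem_nhds hlt)
      obtain ⟨r, hr, hball⟩ := Metric.mem_nhds_iff.mp hnb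
      set g := gradient f x with hg
      have hgn : (0:ℝ) < ‖g‖ := norm_pos_iff.mpr hgx
      set ρ := r / (2 * ‖g‖) with hρdef
      have hρ : 0 < ρ := div_pos hr (by positivity)
      set w := xb + ρ • g with hw
      have hnorm : ρ * ‖g‖ = r / 2 := by
        rw [hρdef]
        field_simp
      have hwb : w ∈ Metric.ball xb r := by
        rw [hw, Metric.mem_ball, dist_eq_norm, add_sub_cancel_left, norm_smul,
          Real.norm_eq_abs, abs_of_pos hρ, hnorm]
        linarith
      have hwmem := hball hwb
      have hle1 : ∀ t ∈ Icc (0:ℝ) 1, f (x + t • (w - x)) ≤ f x := by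
        intro t ht
        have := hqc x hxΓ w hwmem.1 t ht
        rwa [max_eq_left (le_of_lt hwmem.2)] at this
      have h2 := helper_deriv_nonpos (hdiff x hxΓ) hle1
      have h3 : (inner ℝ g (w - x) : ℝ) = inner ℝ g (xb - x) + ρ * ‖g‖^2 := by
        rw [hw, show xb + ρ • g - x = (xb - x) + ρ • g from by abel, inner_add_right,
          real_inner_smul_right, real_inner_self_eq_norm_sq]
      rw [h3] at h2
      nlinarith [mul_pos hρ (pow_pos hgn 2)]
    calc f x ≤ f xb := hfx
    _ ≤ f z := hxbmin z hz
end

section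
/- Let Γ ⊆ ℝⁿ be open and convex, S ⊆ Γ convex, f : Γ → ℝ continuously differentiable and quasiconvex. Let x̄ be a global minimizer of f on S with ∇f(x̄) ≠ 0. Then S̄ = {x ∈ S | ⟨∇f(x), x̄ − x⟩ ≥ ⟨∇f(x̄), x − x̄⟩ and ∇f(x) ≠ 0}. -/
open Filter Set InnerProductSpace
open scoped Topology RealInnerProductSpace

private lemma tendsto_slope_Ioi' {φ : ℝ → ℝ} {D : ℝ} (h : HasDerivAt φ D 0) :
    Filter.Tendsto (slope φ 0) (nhdsWithin 0 (Set.Ioi 0)) (nhds D) :=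
  (hasDerivAt_iff_tendsto_slope.mp h).mono_left
    (nhdsWithin_mono _ fun t ht => ne_of_gt ht)

private lemma deriv_le_of_eventually_le' {ψ χ : ℝ → ℝ} {D₁ D₂ : ℝ}
    (hψ : Filter.Tendsto (slope ψ 0) (nhdsWithin 0 (Set.Ioi 0)) (nhds D₁))
    (hχ : Filter.Tendsto (slope χ 0) (nhdsWithin 0 (Set.Ioi 0)) (nhds D₂))
    (hle : ∀ᶠ t in nhdsWithin 0 (Set.Ioi 0), ψ t ≤ χ t) (h0 : χ 0 ≤ ψ 0) : D₁ ≤ D₂ := by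
  refine le_of_tendsto_of_tendsto hψ hχ ?_
  filter_upwards [hle, self_mem_nhdsWithin] with t ht htpos
  have htpos' : (0:ℝ) < t := htpos
  rw [slope_def_field, slope_def_field]
  exact div_le_div_of_nonneg_right (by linarith) (by linarith)

private lemma tendsto_slope_max' {ψ₁ ψ₃ : ℝ → ℝ} {D₁ D₃ : ℝ}
    (h₁ : Filter.Tendsto (slope ψ₁ 0) (nhdsWithin 0 (Set.Ioi 0)) (nhds D₁))
    (h₃ : Filter.Tendsto (slope ψ₃ 0) (nhdsWithin 0 (Set.Ioi 0)) (nhds D₃))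
    (heq : ψ₁ 0 = ψ₃ 0) :
    Filter.Tendsto (slope (fun t => max (ψ₁ t) (ψ₃ t)) 0) (nhdsWithin 0 (Set.Ioi 0))
      (nhds (max D₁ D₃)) := by
  refine (h₁.max h₃).congr' ?_
  filter_upwards [self_mem_nhdsWithin] with t htpos
  have htpos' : (0:ℝ) < t := htpos
  rw [slope_def_field, slope_def_field, slope_def_field]
  rw [max_div_div_right (by linarith : (0:ℝ) ≤ t - 0)]
  congr 1
  rw [heq, max_sub_sub_right, max_self]

private lemma hasDerivAt_line' {n : ℕ} (f : EuclideanSpace ℝ (Fin n) → ℝ)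
    {p : EuclideanSpace ℝ (Fin n)} (hf : DifferentiableAt ℝ f p)
    (c : EuclideanSpace ℝ (Fin n)) :
    HasDerivAt (fun t : ℝ => f (p + t • c)) (fderiv ℝ f p c) 0 := by
  have h1 : HasDerivAt (fun t : ℝ => p + t • c) c 0 := by
    simpa using ((hasDerivAt_id (0:ℝ)).smul_const c).const_add p
  have h2 : HasFDerivAt f (fderiv ℝ f p) (p + (0:ℝ) • c) := by
    simpa using hf.hasFDerivAt
  exact h2.comp_hasDerivAt (0:ℝ) h1

theorem stmt_12 {n : ℕ} (Γ S : Set (EuclideanSpace ℝ (Fin n)))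
    (hΓo : IsOpen Γ) (hΓ : Convex ℝ Γ) (hS : Convex ℝ S) (hSΓ : S ⊆ Γ)
    (f : EuclideanSpace ℝ (Fin n) → ℝ)
    (hC1 : ContDiffOn ℝ 1 f Γ)
    (hqc : ∀ x ∈ Γ, ∀ y ∈ Γ, ∀ t ∈ Set.Icc (0:ℝ) 1,
        f (x + t • (y - x)) ≤ max (f x) (f y))
    (Sbar : Set (EuclideanSpace ℝ (Fin n)))
    (hSbar : Sbar = {x ∈ S | ∀ y ∈ S, f x ≤ f y})
    (xb : EuclideanSpace ℝ (Fin n)) (hxb : xb ∈ Sbar)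
    (hgxb : gradient f xb ≠ 0) :
    Sbar = {x ∈ S | (inner ℝ (gradient f x) (xb - x) : ℝ) ≥ (inner ℝ (gradient f xb) (x - xb) : ℝ) ∧
      gradient f x ≠ 0} := by
  have hxb' : xb ∈ {x ∈ S | ∀ y ∈ S, f x ≤ f y} := hSbar ▸ hxb
  have hxbS : xb ∈ S := hxb'.1
  have hxbmin : ∀ y ∈ S, f xb ≤ f y := hxb'.2
  have hxbΓ : xb ∈ Γ := hSΓ hxbS
  have hdiff : ∀ p ∈ Γ, DifferentiableAt ℝ f p := fun p hp =>
    (hC1.differentiableOn one_ne_zero).differentiableAt (hΓo.mem_nhds hp)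
  have hgrad_inner : ∀ p w, (inner ℝ (gradient f p) w : ℝ) = fderiv ℝ f p w := by
    intro p w
    unfold gradient
    exact InnerProductSpace.toDual_symm_apply
  have hfc : ContinuousOn (fderiv ℝ f) Γ := hC1.continuousOn_fderiv_of_isOpen hΓo le_rfl
  -- first-order condition at a minimizer
  have hFOC : ∀ x', x' ∈ S → (∀ y ∈ S, f x' ≤ f y) → ∀ w ∈ S,
      0 ≤ fderiv ℝ f x' (w - x') := by
    intro x' hx'S hx'min w hwS
    have hD := hasDerivAt_line' f (hdiff _ (hSΓ hx'S)) (w - x')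
    have hC : HasDerivAt (fun _ : ℝ => f x') 0 0 := hasDerivAt_const 0 (f x')
    refine deriv_le_of_eventually_le' (tendsto_slope_Ioi' hC) (tendsto_slope_Ioi' hD) ?_
      (by simp)
    filter_upwards [Ioc_mem_nhdsGT_of_mem (by norm_num : (0:ℝ) ∈ Set.Ico 0 1)] with t ht
    have hmem : x' + t • (w - x') ∈ S := by
      have := hS hx'S hwS (by linarith [ht.2] : (0:ℝ) ≤ 1 - t) ht.1.le (by ring)
      convert this using 1
      module
    exact hx'min _ hmem
  -- quasiconvex gradient inequality
  have hWeak : ∀ p ∈ Γ, ∀ z ∈ Γ, f z ≤ f p → fderiv ℝ f p (z - p) ≤ 0 := by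
    intro p hp z hz hfz
    have hD := hasDerivAt_line' f (hdiff _ hp) (z - p)
    have hC : HasDerivAt (fun _ : ℝ => f p) 0 0 := hasDerivAt_const 0 (f p)
    refine deriv_le_of_eventually_le' (tendsto_slope_Ioi' hD) (tendsto_slope_Ioi' hC) ?_
      (by simp)
    filter_upwards [Ioc_mem_nhdsGT_of_mem (by norm_num : (0:ℝ) ∈ Set.Ico 0 1)] with t ht
    have := hqc p hp z hz t ⟨ht.1.le, ht.2⟩
    simpa [max_eq_left hfz] using this
  -- main: every minimizer has nonzero gradient
  have hkey : ∀ x', x' ∈ S → (∀ y ∈ S, f x' ≤ f y) → gradient f x' ≠ 0 := by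
    intro x' hx'S hx'min h0
    have hx'Γ : x' ∈ Γ := hSΓ hx'S
    have hfx'0 : ∀ w, fderiv ℝ f x' w = 0 := by
      intro w; rw [← hgrad_inner, h0, inner_zero_left]
    have hfeq : f x' = f xb := le_antisymm (hx'min xb hxbS) (hxbmin x' hx'S)
    set g : EuclideanSpace ℝ (Fin n) := gradient f xb with hg
    set v : EuclideanSpace ℝ (Fin n) := x' - xb with hv
    set q : ℝ → EuclideanSpace ℝ (Fin n) := fun α => xb + α • v with hq
    have hqmem : ∀ α ∈ Set.Icc (0:ℝ) 1, q α ∈ S := by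
      intro α hα
      have := hS hxbS hx'S (by linarith [hα.2] : (0:ℝ) ≤ 1 - α) hα.1 (by ring)
      convert this using 1
      simp only [hq, hv]; module
    have hqval : ∀ α ∈ Set.Icc (0:ℝ) 1, f (q α) = f xb := by
      intro α hα
      refine le_antisymm ?_ (hxbmin _ (hqmem α hα))
      have := hqc xb hxbΓ x' hx'Γ α hα
      simpa [hfeq] using this
    set d : ℝ → ℝ := fun α => fderiv ℝ f (q α) g with hd
    have hq0 : q 0 = xb := by simp [hq]
    have hq1 : q 1 = x' := by simp [hq, hv]
    have hd0 : d 0 = (inner ℝ g g : ℝ) := by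
      show fderiv ℝ f (q 0) g = _
      rw [hq0, ← hgrad_inner]
    have hd0pos : 0 < d 0 := by
      rw [hd0, real_inner_self_eq_norm_sq]
      exact pow_pos (norm_pos_iff.mpr hgxb) 2
    have hdneg : ∀ lam ∈ Set.Ioo (0:ℝ) 1, d lam ≤ 0 := by
      intro lam hlam
      by_contra hpos
      push_neg at hpos
      set B : ℝ := (d 0 + 1) / (lam * d lam) with hB
      have hBpos : 0 < B := div_pos (by linarith) (mul_pos hlam.1 hpos)
      have hqlamΓ : q lam ∈ Γ := hSΓ (hqmem lam ⟨hlam.1.le, hlam.2.le⟩)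
      have hD1 := hasDerivAt_line' f (hdiff _ hxbΓ) g
      have hD3 := hasDerivAt_line' f (hdiff _ hx'Γ) (B • g)
      have hD2 := hasDerivAt_line' f (hdiff _ hqlamΓ) ((1 - lam + lam * B) • g)
      -- eventual membership in Γ
      have hmem1 : ∀ᶠ t in nhdsWithin 0 (Set.Ioi (0:ℝ)), xb + t • g ∈ Γ := by
        have hc : ContinuousAt (fun t : ℝ => xb + t • g) 0 := by fun_prop
        have : ∀ᶠ t in nhds (0:ℝ), xb + t • g ∈ Γ :=
          hc.eventually_mem (by rw [show xb + (0:ℝ) • g = xb by simp]; exact hΓo.mem_nhds hxbΓ)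
        exact this.filter_mono nhdsWithin_le_nhds
      have hmem3 : ∀ᶠ t in nhdsWithin 0 (Set.Ioi (0:ℝ)), x' + t • (B • g) ∈ Γ := by
        have hc : ContinuousAt (fun t : ℝ => x' + t • (B • g)) 0 := by fun_prop
        have : ∀ᶠ t in nhds (0:ℝ), x' + t • (B • g) ∈ Γ :=
          hc.eventually_mem
            (by rw [show x' + (0:ℝ) • (B • g) = x' by simp]; exact hΓo.mem_nhds hx'Γ)
        exact this.filter_mono nhdsWithin_le_nhds
      have hev : ∀ᶠ t in nhdsWithin 0 (Set.Ioi (0:ℝ)),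
          f (q lam + t • ((1 - lam + lam * B) • g)) ≤
            max (f (xb + t • g)) (f (x' + t • (B • g))) := by
        filter_upwards [hmem1, hmem3] with t h1 h3
        have := hqc _ h1 _ h3 lam ⟨hlam.1.le, hlam.2.le⟩
        have hid : (xb + t • g) + lam • ((x' + t • (B • g)) - (xb + t • g)) =
            q lam + t • ((1 - lam + lam * B) • g) := by
          simp only [hq, hv]; module
        rwa [hid] at this
      have hval2 : f (q lam) = f xb := hqval lam ⟨hlam.1.le, hlam.2.le⟩
      have hineq : fderiv ℝ f (q lam) ((1 - lam + lam * B) • g) ≤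
          max (fderiv ℝ f xb g) (fderiv ℝ f x' (B • g)) := by
        refine deriv_le_of_eventually_le' (tendsto_slope_Ioi' hD2)
          (tendsto_slope_max' (tendsto_slope_Ioi' hD1) (tendsto_slope_Ioi' hD3) ?_) hev ?_
        · simp [hfeq]
        · simp [hval2, hfeq]
      have e2 : fderiv ℝ f (q lam) ((1 - lam + lam * B) • g) = (1 - lam + lam * B) * d lam := by
        rw [map_smul, smul_eq_mul]
      have e3 : fderiv ℝ f x' (B • g) = 0 := hfx'0 _
      have e1 : fderiv ℝ f xb g = d 0 := by
        show _ = fderiv ℝ f (q 0) g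
        rw [hq0]
      rw [e1, e2, e3] at hineq
      rw [max_eq_left hd0pos.le] at hineq
      have hne : lam * d lam ≠ 0 := ne_of_gt (mul_pos hlam.1 hpos)
      have hBd : lam * B * d lam = d 0 + 1 := by
        rw [hB, mul_right_comm]; exact mul_div_cancel₀ _ hne
      nlinarith [mul_pos (by linarith [hlam.2] : (0:ℝ) < 1 - lam) hpos]
    -- continuity of d at 0
    have hdc : ContinuousAt d 0 := by
      have hqc0 : ContinuousAt q 0 := by fun_prop
      have hfc0 : ContinuousAt (fderiv ℝ f) (q 0) := by
        rw [hq0]; exact hfc.continuousAt (hΓo.mem_nhds hxbΓ)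
      have happ : Continuous (fun L : EuclideanSpace ℝ (Fin n) →L[ℝ] ℝ => L g) :=
        (ContinuousLinearMap.apply ℝ ℝ g).continuous
      exact (happ.continuousAt).comp (hfc0.comp hqc0)
    have : d 0 ≤ 0 := by
      have htd : Filter.Tendsto d (nhdsWithin 0 (Set.Ioi (0:ℝ))) (nhds (d 0)) :=
        hdc.tendsto.mono_left nhdsWithin_le_nhds
      refine le_of_tendsto htd ?_
      filter_upwards [Ioo_mem_nhdsGT_of_mem (by norm_num : (0:ℝ) ∈ Set.Ico 0 1)] with lam hlam
      exact hdneg lam hlam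
    linarith
  -- assemble
  rw [hSbar]
  ext x
  simp only [Set.mem_setOf_eq, ge_iff_le]
  constructor
  · rintro ⟨hxS, hxmin⟩
    have hxΓ : x ∈ Γ := hSΓ hxS
    have hfeq : f x = f xb := le_antisymm (hxmin xb hxbS) (hxbmin x hxS)
    have h1 : fderiv ℝ f xb (x - xb) = 0 :=
      le_antisymm (hWeak xb hxbΓ x hxΓ hfeq.le) (hFOC xb hxbS hxbmin x hxS)
    have h2 : fderiv ℝ f x (xb - x) = 0 :=
      le_antisymm (hWeak x hxΓ xb hxbΓ hfeq.ge) (hFOC x hxS hxmin xb hxbS)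
    refine ⟨hxS, ?_, hkey x hxS hxmin⟩
    rw [hgrad_inner, hgrad_inner, h1, h2]
  · rintro ⟨hxS, hineq, hgx⟩
    have hxΓ : x ∈ Γ := hSΓ hxS
    refine ⟨hxS, ?_⟩
    have hle : f x ≤ f xb := by
      by_contra hlt
      push_neg at hlt
      set h : EuclideanSpace ℝ (Fin n) := gradient f x with hh
      -- find ε > 0 with xb + ε • h ∈ Γ and f (xb + ε • h) < f x
      have hcf : ContinuousAt (fun ε : ℝ => f (xb + ε • h)) 0 := by
        have hpath : ContinuousAt (fun ε : ℝ => xb + ε • h) 0 := by fun_prop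
        have hfx : ContinuousAt f (xb + (0:ℝ) • h) := by
          rw [show xb + (0:ℝ) • h = xb by simp]
          exact (hdiff xb hxbΓ).continuousAt
        exact Filter.Tendsto.comp hfx hpath
      have hev1 : ∀ᶠ ε in nhds (0:ℝ), f (xb + ε • h) < f x := by
        have : f (xb + (0:ℝ) • h) < f x := by simpa using hlt
        exact hcf.eventually_lt continuousAt_const (by simpa using this)
      have hev2 : ∀ᶠ ε in nhds (0:ℝ), xb + ε • h ∈ Γ := by
        have hc : ContinuousAt (fun ε : ℝ => xb + ε • h) 0 := by fun_prop
        exact hc.eventually_mem (by rw [show xb + (0:ℝ) • h = xb by simp]; exact hΓo.mem_nhds hxbΓ)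
      have hevw : ∀ᶠ ε in nhdsWithin 0 (Set.Ioi (0:ℝ)),
          (f (xb + ε • h) < f x ∧ xb + ε • h ∈ Γ) :=
        Filter.Eventually.filter_mono nhdsWithin_le_nhds (hev1.and hev2)
      obtain ⟨ε, ⟨hεf, hεΓ⟩, hεpos⟩ := (hevw.and self_mem_nhdsWithin).exists
      have hεpos' : (0:ℝ) < ε := hεpos
      have hW := hWeak x hxΓ _ hεΓ hεf.le
      have hsplit : (xb + ε • h) - x = (xb - x) + ε • h := by module
      rw [hsplit, map_add, map_smul, smul_eq_mul] at hW
      have hFO : 0 ≤ fderiv ℝ f xb (x - xb) := hFOC xb hxbS hxbmin x hxS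
      have hIN : fderiv ℝ f xb (x - xb) ≤ fderiv ℝ f x (xb - x) := by
        rw [← hgrad_inner, ← hgrad_inner]; exact hineq
      have hhh : 0 < fderiv ℝ f x h := by
        rw [← hgrad_inner, hh, real_inner_self_eq_norm_sq]
        exact pow_pos (norm_pos_iff.mpr (hh ▸ hgx)) 2
      nlinarith
    intro y hy
    exact hle.trans (hxbmin y hy)
end

section
/- Let Γ ⊆ ℝⁿ be open and convex, S ⊆ Γ convex, f : Γ → ℝ continuously differentiable and pseudoconvex on Γ. Let x̄ be a known global minimizer of f on S. Then S̄ = {x ∈ S | ⟨∇f(x̄), x − x̄⟩ = 0 and ∃ p > 0 with ∇f(x) = p·∇f(x̄)}. -/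
open Filter Topology

section helpers

variable {n : ℕ}

local notation "E" => EuclideanSpace ℝ (Fin n)

lemma line_hasDerivAt (f : E → ℝ) {x g : E}
    (h : HasGradientAt f g x) (u : E) :
    HasDerivAt (fun s : ℝ => f (x + s • u)) (inner ℝ g u : ℝ) 0 := by
  have h1 : HasDerivAt (fun s : ℝ => x + s • u) u 0 := by
    simpa using ((hasDerivAt_id (0:ℝ)).smul_const u).const_add x
  have h0 : HasFDerivAt f ((InnerProductSpace.toDual ℝ _) g) (x + (0:ℝ) • u) := by
    simpa using h.hasFDerivAt
  have h2 := h0.comp_hasDerivAt 0 h1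
  exact h2

lemma deriv_nonneg_of_min {g : ℝ → ℝ} {c : ℝ} (hg : HasDerivAt g c 0)
    (h : ∀ᶠ s in 𝓝[>] (0:ℝ), g 0 ≤ g s) : 0 ≤ c := by
  have ht : Tendsto (slope g 0) (𝓝[>] (0:ℝ)) (𝓝 c) :=
    (hasDerivAt_iff_tendsto_slope.mp hg).mono_left
      (nhdsWithin_mono 0 (fun s hs => ne_of_gt hs))
  refine ge_of_tendsto ht ?_
  filter_upwards [h, self_mem_nhdsWithin] with s hs hs0
  have hs0' : 0 < s := hs0
  have h1 : slope g 0 s = (g s - g 0) / s := by simp [slope_def_field]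
  rw [h1]
  exact div_nonneg (by linarith) hs0'.le

lemma eventually_lt_of_deriv_neg' {g : ℝ → ℝ} {c : ℝ} (hg : HasDerivAt g c 0)
    (hc : c < 0) : ∀ᶠ s in 𝓝[>] (0:ℝ), g s < g 0 := by
  have ht : Tendsto (slope g 0) (𝓝[>] (0:ℝ)) (𝓝 c) :=
    (hasDerivAt_iff_tendsto_slope.mp hg).mono_left
      (nhdsWithin_mono 0 (fun s hs => ne_of_gt hs))
  have hev : ∀ᶠ s in 𝓝[>] (0:ℝ), slope g 0 s < 0 :=
    ht.eventually_lt_const hc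
  filter_upwards [hev, self_mem_nhdsWithin] with s hs hs0
  have hs0' : (0:ℝ) < s := hs0
  have h1 : slope g 0 s = (g s - g 0) / s := by simp [slope_def_field]
  rw [h1, div_neg_iff] at hs
  rcases hs with ⟨_, h2⟩ | ⟨h2, _⟩
  · linarith
  · linarith

end helpers

theorem stmt_14 {n : ℕ} (Γ S : Set (EuclideanSpace ℝ (Fin n)))
    (hΓo : IsOpen Γ) (hΓ : Convex ℝ Γ) (hS : Convex ℝ S) (hSΓ : S ⊆ Γ)
    (f : EuclideanSpace ℝ (Fin n) → ℝ)
    (hC1 : ContDiffOn ℝ 1 f Γ)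
    (hpc : ∀ x ∈ Γ, ∀ y ∈ Γ, f y < f x → (inner ℝ (gradient f x) (y - x) : ℝ) < 0)
    (Sbar : Set (EuclideanSpace ℝ (Fin n)))
    (hSbar : Sbar = {x ∈ S | ∀ y ∈ S, f x ≤ f y})
    (xb : EuclideanSpace ℝ (Fin n)) (hxb : xb ∈ Sbar) :
    Sbar = {x ∈ S | (inner ℝ (gradient f xb) (x - xb) : ℝ) = 0 ∧
      ∃ p : ℝ, 0 < p ∧ gradient f x = p • gradient f xb} := by
  subst hSbar
  obtain ⟨hxbS, hxbmin⟩ := hxb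
  have hxbΓ : xb ∈ Γ := hSΓ hxbS
  have hgrad : ∀ z ∈ Γ, HasGradientAt f (gradient f z) z := fun z hz =>
    ((hC1.contDiffAt (hΓo.mem_nhds hz)).differentiableAt one_ne_zero).hasGradientAt
  -- if the gradient vanishes at a point of Γ, that point is a global min on Γ
  have hglob : ∀ z ∈ Γ, gradient f z = 0 → ∀ y ∈ Γ, f z ≤ f y := by
    intro z hz h0 y hy
    by_contra hlt
    have := hpc z hz y hy (not_le.mp hlt)
    rw [h0] at this
    simp at this
  -- a global min on Γ has vanishing gradient
  have hloc : ∀ z ∈ Γ, (∀ y ∈ Γ, f z ≤ f y) → gradient f z = 0 := by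
    intro z hz hmin
    have hl : IsLocalMin f z := by
      filter_upwards [hΓo.mem_nhds hz] with y hy using hmin y hy
    rw [gradient, hl.fderiv_eq_zero, map_zero]
  ext x
  simp only [Set.mem_setOf_eq]
  constructor
  · rintro ⟨hxS, hxmin⟩
    have hxΓ : x ∈ Γ := hSΓ hxS
    have hfeq : f x = f xb := le_antisymm (hxmin xb hxbS) (hxbmin x hxS)
    set a := gradient f xb with ha
    set b := gradient f x with hb
    set d := x - xb with hd
    have hAd : (0:ℝ) ≤ inner ℝ a d := by
      refine deriv_nonneg_of_min (line_hasDerivAt f (hgrad xb hxbΓ) d) ?_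
      filter_upwards [Ioo_mem_nhdsGT_of_mem (Set.left_mem_Ico.mpr one_pos)] with s hs
      have hmem : xb + s • d ∈ S := by
        have h2 := hS hxbS hxS (by linarith [hs.2] : (0:ℝ) ≤ 1 - s) hs.1.le (by ring)
        have h3 : xb + s • d = (1 - s) • xb + s • x := by
          rw [hd]; module
        rw [h3]; exact h2
      simpa using hxbmin _ hmem
    have hBd : (inner ℝ b d : ℝ) ≤ 0 := by
      have h0 : (0:ℝ) ≤ inner ℝ b (-d) := by
        refine deriv_nonneg_of_min (line_hasDerivAt f (hgrad x hxΓ) (-d)) ?_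
        filter_upwards [Ioo_mem_nhdsGT_of_mem (Set.left_mem_Ico.mpr one_pos)] with s hs
        have hmem : x + s • (-d) ∈ S := by
          have h2 := hS hxS hxbS (by linarith [hs.2] : (0:ℝ) ≤ 1 - s) hs.1.le (by ring)
          have h3 : x + s • (-d) = (1 - s) • x + s • xb := by
            rw [hd]; module
          rw [h3]; exact h2
        simpa using hxmin _ hmem
      rw [inner_neg_right] at h0
      linarith
    -- key: any direction of strict decrease at x has nonpositive product with a
    have key : ∀ u : EuclideanSpace ℝ (Fin n),
        (inner ℝ b u : ℝ) < 0 → (inner ℝ a u : ℝ) ≤ 0 := by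
      intro u hu
      have hev1 := eventually_lt_of_deriv_neg' (line_hasDerivAt f (hgrad x hxΓ) u) hu
      have hev2 : ∀ᶠ s in 𝓝[>] (0:ℝ), x + s • u ∈ Γ := by
        have hcont : Continuous (fun s : ℝ => x + s • u) :=
          continuous_const.add (continuous_id.smul continuous_const)
        have h4 : ∀ᶠ s in 𝓝 (0:ℝ), x + s • u ∈ Γ :=
          hcont.continuousAt (hΓo.mem_nhds (by simpa using hxΓ))
        exact h4.filter_mono nhdsWithin_le_nhds
      obtain ⟨s, hs1, hs2, hs0⟩ := (hev1.and (hev2.and self_mem_nhdsWithin)).exists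
      have hs0' : (0:ℝ) < s := hs0
      have hlt : f (x + s • u) < f xb := by
        rw [← hfeq]; simpa using hs1
      have h3 := hpc xb hxbΓ _ hs2 hlt
      have h4 : x + s • u - xb = d + s • u := by rw [hd]; abel
      rw [h4, inner_add_right, real_inner_smul_right] at h3
      by_contra hpos
      push_neg at hpos
      nlinarith
    by_cases haz : a = 0
    · refine ⟨hxS, by simp [haz], 1, one_pos, ?_⟩
      have hxglob : ∀ y ∈ Γ, f x ≤ f y := fun y hy => hfeq ▸ hglob xb hxbΓ haz y hy
      rw [hb] at *
      rw [hloc x hxΓ hxglob, haz, smul_zero]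
    · have hbz : b ≠ 0 := by
        intro hb0
        exact haz (hloc xb hxbΓ (fun y hy => hfeq ▸ hglob x hxΓ hb0 y hy))
      have hbb : (0:ℝ) < inner ℝ b b :=
        lt_of_le_of_ne real_inner_self_nonneg
          (fun h => hbz ((inner_self_eq_zero (𝕜 := ℝ)).mp h.symm))
      set lam : ℝ := (inner ℝ a b : ℝ) / (inner ℝ b b : ℝ) with hlam
      set w : EuclideanSpace ℝ (Fin n) := a - lam • b with hwdef
      have hab : (0:ℝ) ≤ inner ℝ a b := by
        have := key (-b) (by rw [inner_neg_right]; linarith)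
        rw [inner_neg_right] at this; linarith
      have hlam0 : 0 ≤ lam := div_nonneg hab hbb.le
      have hbw : (inner ℝ b w : ℝ) = 0 := by
        rw [hwdef, inner_sub_right, real_inner_smul_right, hlam,
          div_mul_cancel₀ _ (ne_of_gt hbb), real_inner_comm, sub_self]
      have haw : (inner ℝ a w : ℝ) = inner ℝ w w := by
        have h5 : a = w + lam • b := by rw [hwdef]; abel
        rw [h5, inner_add_left, real_inner_smul_left, hbw, mul_zero, add_zero]
      have hww : (inner ℝ w w : ℝ) ≤ 0 := by
        by_contra hcon
        push_neg at hcon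
        have h6 := key (w - ((inner ℝ w w : ℝ) / (2 * (inner ℝ a b : ℝ) + 2)) • b)
          (by
            rw [inner_sub_right, real_inner_smul_right, hbw, zero_sub, neg_neg_iff_pos]
            positivity)
        rw [inner_sub_right, real_inner_smul_right, haw] at h6
        have h7 : (inner ℝ w w : ℝ) / (2 * (inner ℝ a b : ℝ) + 2) * (inner ℝ a b : ℝ)
            < inner ℝ w w := by
          rw [div_mul_eq_mul_div, div_lt_iff₀ (by positivity)]
          nlinarith
        linarith
      have hw0 : w = 0 := by
        have : (0:ℝ) ≤ inner ℝ w w := real_inner_self_nonneg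
        have h8 : (inner ℝ w w : ℝ) = 0 := le_antisymm hww this
        exact (inner_self_eq_zero (𝕜 := ℝ)).mp h8
      have halam : a = lam • b := by
        have := hw0
        rw [hwdef, sub_eq_zero] at this
        exact this
      have hlampos : 0 < lam := by
        rcases hlam0.lt_or_eq with h | h
        · exact h
        · exfalso; apply haz; rw [halam, ← h, zero_smul]
      refine ⟨hxS, ?_, lam⁻¹, by positivity, ?_⟩
      · have h9 : (inner ℝ a d : ℝ) = lam * inner ℝ b d := by
          rw [halam, real_inner_smul_left]
        have : (inner ℝ a d : ℝ) ≤ 0 := by rw [h9]; exact mul_nonpos_of_nonneg_of_nonpos hlam0 hBd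
        linarith [hAd, this]
      · rw [halam, smul_smul, inv_mul_cancel₀ (ne_of_gt hlampos), one_smul]
  · rintro ⟨hxS, h1, p, hp, hpg⟩
    refine ⟨hxS, fun y hy => ?_⟩
    have hxΓ : x ∈ Γ := hSΓ hxS
    have hxxb : f x ≤ f xb := by
      by_contra hlt
      have h2 := hpc x hxΓ xb hxbΓ (not_le.mp hlt)
      rw [hpg, real_inner_smul_left] at h2
      have h3 : (inner ℝ (gradient f xb) (xb - x) : ℝ) = 0 := by
        have h4 : xb - x = -(x - xb) := by abel
        rw [h4, inner_neg_right, h1, neg_zero]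
      rw [h3, mul_zero] at h2
      exact lt_irrefl 0 h2
    exact le_trans hxxb (hxbmin y hy)
end

section
/- Let Γ ⊆ ℝⁿ be open and convex, S ⊆ Γ convex, f : Γ → ℝ continuously differentiable, quasiconvex and convex, and let x̄ be a global minimizer of f on S with ∇f(x̄) ≠ 0. Then for every global minimizer x of f on S, ∇f(x) = ∇f(x̄). -/
open InnerProductSpace

/-- Gradient inequality for convex functions. -/
lemma grad_ineq_aux {n : ℕ} {Γ : Set (EuclideanSpace ℝ (Fin n))}
    {f : EuclideanSpace ℝ (Fin n) → ℝ} (hconv : ConvexOn ℝ Γ f)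
    {c z g : EuclideanSpace ℝ (Fin n)} (hc : c ∈ Γ) (hz : z ∈ Γ)
    (hg : HasGradientAt f g c) :
    f c + inner ℝ g (z - c) ≤ f z := by
  set L : ℝ →ᵃ[ℝ] EuclideanSpace ℝ (Fin n) := AffineMap.lineMap c z with hL
  have hL0 : L 0 = c := AffineMap.lineMap_apply_zero c z
  have hL1 : L 1 = z := AffineMap.lineMap_apply_one c z
  have hconv' : ConvexOn ℝ (L ⁻¹' Γ) (f ∘ L) := hconv.comp_affineMap L
  have h0 : (0:ℝ) ∈ L ⁻¹' Γ := by simp [Set.mem_preimage, hL0, hc]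
  have h1 : (1:ℝ) ∈ L ⁻¹' Γ := by simp [Set.mem_preimage, hL1, hz]
  have hline : HasDerivAt (fun t : ℝ => L t) (z - c) 0 := by
    have h1 : HasDerivAt (fun t : ℝ => t • (z - c) + c) ((1:ℝ) • (z - c)) 0 :=
      ((hasDerivAt_id (0:ℝ)).smul_const (z - c)).add_const c
    have h2 : (fun t : ℝ => L t) = fun t : ℝ => t • (z - c) + c := by
      funext t
      simp [hL, AffineMap.lineMap_apply, vsub_eq_sub, vadd_eq_add, add_comm]
    rw [h2]
    simpa using h1
  have hderiv : HasDerivAt (f ∘ L) (inner ℝ g (z - c) : ℝ) 0 := by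
    have hf : HasFDerivAt f ((toDual ℝ (EuclideanSpace ℝ (Fin n))) g) (L 0) := by
      rw [hL0]; exact hg.hasFDerivAt
    have := hf.comp_hasDerivAt 0 hline
    simpa using this
  have hle := hconv'.le_slope_of_hasDerivAt h0 h1 one_pos hderiv
  rw [slope_def_field] at hle
  simp only [Function.comp_apply, hL0, hL1] at hle
  have : inner ℝ g (z - c) ≤ f z - f c := by
    simpa [div_one] using hle
  linarith

theorem stmt_16 {n : ℕ} (Γ S : Set (EuclideanSpace ℝ (Fin n)))
    (hΓo : IsOpen Γ) (hΓ : Convex ℝ Γ) (hS : Convex ℝ S) (hSΓ : S ⊆ Γ)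
    (f : EuclideanSpace ℝ (Fin n) → ℝ)
    (hC1 : ContDiffOn ℝ 1 f Γ)
    (hqc : ∀ x ∈ Γ, ∀ y ∈ Γ, ∀ t ∈ Set.Icc (0:ℝ) 1,
        f (x + t • (y - x)) ≤ max (f x) (f y))
    (hconv : ConvexOn ℝ Γ f)
    (xb : EuclideanSpace ℝ (Fin n))
    (hxb : xb ∈ S ∧ ∀ y ∈ S, f xb ≤ f y)
    (hgxb : gradient f xb ≠ 0)
    (x : EuclideanSpace ℝ (Fin n))
    (hx : x ∈ S ∧ ∀ y ∈ S, f x ≤ f y) :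
    gradient f x = gradient f xb := by
  obtain ⟨hxS, hxmin⟩ := hx
  obtain ⟨hxbS, hxbmin⟩ := hxb
  have hxΓ : x ∈ Γ := hSΓ hxS
  have hxbΓ : xb ∈ Γ := hSΓ hxbS
  have hdiff : ∀ y ∈ Γ, DifferentiableAt ℝ f y := fun y hy =>
    (hC1.differentiableOn one_ne_zero).differentiableAt (hΓo.mem_nhds hy)
  set c := (1/2 : ℝ) • x + (1/2 : ℝ) • xb with hc
  have hcS : c ∈ S := hS hxS hxbS (by norm_num) (by norm_num) (by norm_num)
  have hcΓ : c ∈ Γ := hSΓ hcS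
  have hfxeq : f x = f xb := le_antisymm (hxmin xb hxbS) (hxbmin x hxS)
  have hfc : f c = f xb := by
    refine le_antisymm ?_ (hxbmin c hcS)
    have h := hconv.2 hxΓ hxbΓ (by norm_num : (0:ℝ) ≤ 1/2) (by norm_num : (0:ℝ) ≤ 1/2)
      (by norm_num : (1/2:ℝ) + 1/2 = 1)
    calc f c ≤ (1/2) * f x + (1/2) * f xb := by rw [hc]; simpa [smul_eq_mul] using h
    _ = f xb := by rw [hfxeq]; ring
  set g := gradient f c with hgdef
  have hgc : HasGradientAt f g c := (hdiff c hcΓ).hasGradientAt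
  have h1 : f c + inner ℝ g (x - c) ≤ f x := grad_ineq_aux hconv hcΓ hxΓ hgc
  have h2 : f c + inner ℝ g (xb - c) ≤ f xb := grad_ineq_aux hconv hcΓ hxbΓ hgc
  have hxmc : x - c = -(xb - c) := by rw [hc]; module
  have hinx : (inner ℝ g (x - c) : ℝ) = 0 := by
    have e : (inner ℝ g (x - c) : ℝ) = -(inner ℝ g (xb - c) : ℝ) := by
      rw [hxmc, inner_neg_right]
    rw [hfc] at h1 h2
    rw [hfxeq] at h1
    linarith
  have hinxb : (inner ℝ g (xb - c) : ℝ) = 0 := by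
    have e : (inner ℝ g (x - c) : ℝ) = -(inner ℝ g (xb - c) : ℝ) := by
      rw [hxmc, inner_neg_right]
    linarith
  have key : ∀ y, y ∈ Γ → f y = f c → (inner ℝ g (y - c) : ℝ) = 0 → gradient f y = g := by
    intro y hyΓ hfy hin
    set φ := fun z => f z - (toDual ℝ (EuclideanSpace ℝ (Fin n)) g) z with hφ
    have hφmin : IsLocalMin φ y := by
      have hev : ∀ᶠ z in nhds y, z ∈ Γ := hΓo.eventually_mem hyΓ
      filter_upwards [hev] with z hz
      have h3 : f c + inner ℝ g (z - c) ≤ f z := grad_ineq_aux hconv hcΓ hz hgc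
      have e1 : (inner ℝ g (z - c) : ℝ) = inner ℝ g z - inner ℝ g c := inner_sub_right g z c
      have e2 : (inner ℝ g (y - c) : ℝ) = inner ℝ g y - inner ℝ g c := inner_sub_right g y c
      simp only [hφ, toDual_apply_apply]
      rw [e1] at h3
      rw [e2] at hin
      linarith
    have hφd : HasFDerivAt φ
        (toDual ℝ (EuclideanSpace ℝ (Fin n)) (gradient f y) -
          toDual ℝ (EuclideanSpace ℝ (Fin n)) g) y :=
      ((hdiff y hyΓ).hasGradientAt.hasFDerivAt).sub
        ((toDual ℝ (EuclideanSpace ℝ (Fin n)) g).hasFDerivAt)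
    have h0 := hφmin.hasFDerivAt_eq_zero hφd
    have : toDual ℝ (EuclideanSpace ℝ (Fin n)) (gradient f y - g) = 0 := by
      rw [map_sub]; exact h0
    have h4 : gradient f y - g = 0 := (toDual ℝ (EuclideanSpace ℝ (Fin n))).injective
      (by rw [this]; simp)
    exact sub_eq_zero.mp h4
  have hgx : gradient f x = g := key x hxΓ (hfxeq.trans hfc.symm) hinx
  have hgxb' : gradient f xb = g := key xb hxbΓ hfc.symm hinxb
  rw [hgx, hgxb']
end

section
/- Let Γ ⊆ ℝⁿ be open and convex, S ⊆ Γ convex, f : Γ → ℝ continuously differentiable and pseudoconvex on Γ, and let x̄ be a global minimizer of f on S. Then S̄ = {x ∈ S | ⟨∇f(x), x̄ − x⟩ ≥ 0}. -/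
theorem stmt_17 {n : ℕ} (Γ S : Set (EuclideanSpace ℝ (Fin n)))
    (hΓo : IsOpen Γ) (hΓ : Convex ℝ Γ) (hS : Convex ℝ S) (hSΓ : S ⊆ Γ)
    (f : EuclideanSpace ℝ (Fin n) → ℝ)
    (hC1 : ContDiffOn ℝ 1 f Γ)
    (hpc : ∀ x ∈ Γ, ∀ y ∈ Γ, f y < f x → (inner ℝ (gradient f x) (y - x) : ℝ) < 0)
    (Sbar : Set (EuclideanSpace ℝ (Fin n)))
    (hSbar : Sbar = {x ∈ S | ∀ y ∈ S, f x ≤ f y})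
    (xb : EuclideanSpace ℝ (Fin n)) (hxb : xb ∈ Sbar) :
    Sbar = {x ∈ S | (inner ℝ (gradient f x) (xb - x) : ℝ) ≥ 0} := by
  subst hSbar
  obtain ⟨hxbS, hxbmin⟩ := hxb
  ext x
  constructor
  · rintro ⟨hxS, hxmin⟩
    refine ⟨hxS, ?_⟩
    have hdiff : DifferentiableAt ℝ f x :=
      (hC1.differentiableOn one_ne_zero).differentiableAt (hΓo.mem_nhds (hSΓ hxS))
    have hgrad : HasGradientAt f (gradient f x) x := hdiff.hasGradientAt
    have hfd : HasFDerivAt f (InnerProductSpace.toDual ℝ _ (gradient f x)) x :=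
      hasGradientAt_iff_hasFDerivAt.mp hgrad
    have hmin : IsLocalMinOn f S x :=
      (isMinOn_iff.mpr hxmin).localize
    have hcone : xb - x ∈ posTangentConeAt S x :=
      sub_mem_posTangentConeAt_of_segment_subset (hS.segment_subset hxS hxbS)
    have := hmin.hasFDerivWithinAt_nonneg hfd.hasFDerivWithinAt hcone
    simpa [InnerProductSpace.toDual_apply_apply] using this
  · rintro ⟨hxS, hge⟩
    refine ⟨hxS, fun y hy => ?_⟩
    have hnot : ¬ f xb < f x := fun h =>
      absurd (hpc x (hSΓ hxS) xb (hSΓ hxbS) h) (not_lt.mpr hge)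
    exact le_trans (not_lt.mp hnot) (hxbmin y hy)
end

section
/- Let f and g₁,…,g_m be differentiable quasiconvex functions on an open convex set Γ ⊆ ℝⁿ, X ⊆ Γ convex, and S = {x ∈ X | gᵢ(x) ≤ 0 for all i}. Let x̄ be a global minimizer of f over S satisfying the KKT conditions with multiplier λ ≥ 0 (i.e., ⟨∇f(x̄) + Σ_{i∈I(x̄)} λᵢ∇gᵢ(x̄), x − x̄⟩ ≥ 0 for all x ∈ X and λᵢgᵢ(x̄) = 0), and suppose ∇g_j(x̄) ≠ 0 for every j ∈ I(x̄) with λ_j > 0. Then every global minimizer x of f over S satisfies gᵢ(x) = 0 for all i with gᵢ(x̄) = 0 and λᵢ > 0, and the Lagrangian L(x) = f(x) + Σ_{i∈I(x̄)} λᵢgᵢ(x) is constant over the solution set. -/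
open Filter Topology


lemma lemA {n : ℕ} {Γ : Set (EuclideanSpace ℝ (Fin n))}
    {h : EuclideanSpace ℝ (Fin n) → ℝ}
    (hd : ∀ z ∈ Γ, DifferentiableAt ℝ h z)
    (hqc : ∀ x ∈ Γ, ∀ y ∈ Γ, ∀ t ∈ Set.Icc (0:ℝ) 1,
        h (x + t • (y - x)) ≤ max (h x) (h y))
    {x y : EuclideanSpace ℝ (Fin n)} (hx : x ∈ Γ) (hy : y ∈ Γ)
    (hle : h y ≤ h x) : (inner ℝ (gradient h x) (y - x) : ℝ) ≤ 0 := by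
  have hg : HasGradientAt h (gradient h x) x := (hd x hx).hasGradientAt
  have hF : HasFDerivAt h (fderiv ℝ h x) x := (hd x hx).hasFDerivAt
  set φ : ℝ → ℝ := fun t => h (x + t • (y - x)) with hφdef
  have hline : HasDerivAt (fun t : ℝ => x + t • (y - x)) (y - x) 0 := by
    simpa using ((hasDerivAt_id (0:ℝ)).smul_const (y - x)).const_add x
  have hφ : HasDerivAt φ (fderiv ℝ h x (y - x)) 0 := by
    have hF' : HasFDerivAt h (fderiv ℝ h x) ((fun t : ℝ => x + t • (y - x)) 0) := by
      simpa using hF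
    exact hF'.comp_hasDerivAt 0 hline
  have hmax : ∀ t ∈ Set.Icc (0:ℝ) 1, φ t ≤ φ 0 := by
    intro t ht
    have := hqc x hx y hy t ht
    simpa [hφdef, max_eq_left hle] using this
  have hslope : Tendsto (slope φ 0) (𝓝[>] 0) (𝓝 (fderiv ℝ h x (y - x))) :=
    (hasDerivAt_iff_tendsto_slope.mp hφ).mono_left
      (nhdsWithin_mono _ (by intro t ht; exact ne_of_gt ht))
  have hev : ∀ᶠ t in 𝓝[>] (0:ℝ), slope φ 0 t ≤ 0 := by
    filter_upwards [Ioc_mem_nhdsGT_of_mem (Set.left_mem_Ico.2 one_pos)] with t ht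
    have h1 : φ t - φ 0 ≤ 0 := sub_nonpos.2 (hmax t ⟨ht.1.le, ht.2⟩)
    have : slope φ 0 t = (φ t - φ 0) / t := by simp [slope_def_field, div_eq_inv_mul]
    rw [this]
    exact div_nonpos_of_nonpos_of_nonneg h1 ht.1.le
  have hfle : fderiv ℝ h x (y - x) ≤ 0 := le_of_tendsto hslope hev
  have heq : fderiv ℝ h x (y - x) = inner ℝ (gradient h x) (y - x) := by
    rw [hg.hasFDerivAt.fderiv]
    simp
  linarith [heq ▸ hfle]
lemma lemB {n : ℕ} {Γ : Set (EuclideanSpace ℝ (Fin n))} (hΓo : IsOpen Γ)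
    {h : EuclideanSpace ℝ (Fin n) → ℝ}
    (hd : ∀ z ∈ Γ, DifferentiableAt ℝ h z)
    (hqc : ∀ x ∈ Γ, ∀ y ∈ Γ, ∀ t ∈ Set.Icc (0:ℝ) 1,
        h (x + t • (y - x)) ≤ max (h x) (h y))
    (lemA : ∀ x ∈ Γ, ∀ y ∈ Γ, h y ≤ h x → (inner ℝ (gradient h x) (y - x) : ℝ) ≤ 0)
    {x y : EuclideanSpace ℝ (Fin n)} (hx : x ∈ Γ) (hy : y ∈ Γ)
    (hlt : h y < h x) (hgrad : gradient h x ≠ 0) :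
    (inner ℝ (gradient h x) (y - x) : ℝ) < 0 := by
  set d := gradient h x with hd'
  have hcont : ContinuousAt (fun ε : ℝ => y + ε • d) 0 := by fun_prop
  have h1 : ∀ᶠ ε in 𝓝 (0:ℝ), y + ε • d ∈ Γ := by
    have : Γ ∈ 𝓝 ((fun ε : ℝ => y + ε • d) 0) := hΓo.mem_nhds (by simpa using hy)
    exact hcont.eventually_mem this
  have h2 : ∀ᶠ ε in 𝓝 (0:ℝ), h (y + ε • d) < h x := by
    have hc2 : ContinuousAt (fun ε : ℝ => h (y + ε • d)) 0 := by
      apply ContinuousAt.comp _ hcont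
      simpa using (hd y hy).continuousAt
    have : Tendsto (fun ε : ℝ => h (y + ε • d)) (𝓝 0) (𝓝 (h y)) := by
      simpa using hc2.tendsto
    exact this.eventually_lt_const hlt
  have hall : ∀ᶠ ε in 𝓝[>] (0:ℝ), (y + ε • d ∈ Γ ∧ h (y + ε • d) < h x) ∧ ε ∈ Set.Ioi (0:ℝ) :=
    (((h1.and h2).filter_mono nhdsWithin_le_nhds).and self_mem_nhdsWithin)
  obtain ⟨ε, ⟨hmem, hlt'⟩, hεpos⟩ := hall.exists
  have key := lemA x hx (y + ε • d) hmem hlt'.le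
  have hexp : (inner ℝ d (y + ε • d - x) : ℝ)
      = inner ℝ d (y - x) + ε * (inner ℝ d d : ℝ) := by
    have : y + ε • d - x = (y - x) + ε • d := by abel
    rw [this, inner_add_right, real_inner_smul_right]
  rw [hexp] at key
  have hdd : (0:ℝ) < inner ℝ d d := by
    rw [real_inner_self_eq_norm_sq]
    exact pow_pos (norm_pos_iff.2 hgrad) 2
  have hεpos' : (0:ℝ) < ε := hεpos
  nlinarith

theorem stmt_18 {n m : ℕ} (Γ X : Set (EuclideanSpace ℝ (Fin n)))
    (hΓo : IsOpen Γ) (hΓ : Convex ℝ Γ) (hX : Convex ℝ X) (hXΓ : X ⊆ Γ)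
    (f : EuclideanSpace ℝ (Fin n) → ℝ)
    (g : Fin m → EuclideanSpace ℝ (Fin n) → ℝ)
    (hfd : ∀ z ∈ Γ, DifferentiableAt ℝ f z)
    (hgd : ∀ i, ∀ z ∈ Γ, DifferentiableAt ℝ (g i) z)
    (hfqc : ∀ x ∈ Γ, ∀ y ∈ Γ, ∀ t ∈ Set.Icc (0:ℝ) 1,
        f (x + t • (y - x)) ≤ max (f x) (f y))
    (hgqc : ∀ i, ∀ x ∈ Γ, ∀ y ∈ Γ, ∀ t ∈ Set.Icc (0:ℝ) 1,
        g i (x + t • (y - x)) ≤ max (g i x) (g i y))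
    (S : Set (EuclideanSpace ℝ (Fin n)))
    (hSdef : S = {x ∈ X | ∀ i, g i x ≤ 0})
    (xb : EuclideanSpace ℝ (Fin n))
    (hxb : xb ∈ S ∧ ∀ y ∈ S, f xb ≤ f y)
    (lam : Fin m → ℝ) (hlam : ∀ i, 0 ≤ lam i)
    (hKKT : ∀ x ∈ X,
      (inner ℝ (gradient f xb + ∑ i, lam i • gradient (g i) xb) (x - xb) : ℝ) ≥ 0)
    (hcompl : ∀ i, lam i * g i xb = 0)
    (hMFCQ : ∀ j, g j xb = 0 → 0 < lam j → gradient (g j) xb ≠ 0) :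
    ∀ x ∈ S, (∀ y ∈ S, f x ≤ f y) →
      (∀ i, g i xb = 0 → 0 < lam i → g i x = 0) ∧
      f x + ∑ i, lam i * g i x = f xb + ∑ i, lam i * g i xb := by
  intro x hxS hxmin
  have hxbX : xb ∈ X := by rw [hSdef] at hxb; exact hxb.1.1
  have hxbg : ∀ i, g i xb ≤ 0 := by rw [hSdef] at hxb; exact hxb.1.2
  have hxX : x ∈ X := by rw [hSdef] at hxS; exact hxS.1
  have hxg : ∀ i, g i x ≤ 0 := by rw [hSdef] at hxS; exact hxS.2
  have hxbΓ : xb ∈ Γ := hXΓ hxbX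
  have hxΓ : x ∈ Γ := hXΓ hxX
  have hfx : f x = f xb := le_antisymm (hxmin xb hxb.1) (hxb.2 x hxS)
  -- active with positive multiplier implies g i xb = 0
  have hact : ∀ i, 0 < lam i → g i xb = 0 := fun i hi => by
    have := hcompl i
    exact (mul_eq_zero.1 this).resolve_left (ne_of_gt hi)
  -- directional derivatives
  set v := x - xb with hv
  set a : Fin m → ℝ := fun i => (inner ℝ (gradient (g i) xb) v : ℝ) with ha
  have hai : ∀ i, 0 < lam i → a i ≤ 0 :=
    fun i hi => lemA (hgd i) (hgqc i) hxbΓ hxΓ (by rw [hact i hi]; exact hxg i)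
  have hf0 : (inner ℝ (gradient f xb) v : ℝ) ≤ 0 :=
    lemA hfd hfqc hxbΓ hxΓ hfx.le
  -- expand KKT
  have hK := hKKT x hxX
  have hKexp : (inner ℝ (gradient f xb + ∑ i, lam i • gradient (g i) xb) v : ℝ)
      = (inner ℝ (gradient f xb) v : ℝ) + ∑ i, lam i * a i := by
    rw [inner_add_left, sum_inner]
    congr 1
    exact Finset.sum_congr rfl fun i _ => real_inner_smul_left _ _ _
  rw [hKexp] at hK
  have hterm : ∀ i ∈ Finset.univ, lam i * a i ≤ 0 := by
    intro i _
    rcases eq_or_lt_of_le (hlam i) with hz | hp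
    · simp [← hz]
    · exact mul_nonpos_of_nonneg_of_nonpos (hlam i) (hai i hp)
  have hsum0 : ∑ i, lam i * a i = 0 := by
    have hs : ∑ i, lam i * a i ≤ 0 := Finset.sum_nonpos hterm
    linarith
  have hterm0 : ∀ i, lam i * a i = 0 := by
    intro i
    have hge : -(lam i * a i) ≤ ∑ j, -(lam j * a j) :=
      Finset.single_le_sum (fun j _ => neg_nonneg.2 (hterm j (Finset.mem_univ j)))
        (Finset.mem_univ i)
    rw [Finset.sum_neg_distrib, hsum0, neg_zero] at hge
    have := hterm i (Finset.mem_univ i)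
    linarith
  -- key claim
  have hkey : ∀ i, 0 < lam i → g i x = 0 := by
    intro i hi
    rcases eq_or_lt_of_le (hxg i) with he | hl
    · exact he
    have hne : gradient (g i) xb ≠ 0 := hMFCQ i (hact i hi) hi
    have hstrict : a i < 0 := by
      apply lemB hΓo (hgd i) (hgqc i)
        (fun p hp q hq hle => lemA (hgd i) (hgqc i) hp hq hle) hxbΓ hxΓ _ hne
      rw [hact i hi]; exact hl
    have := hterm0 i
    nlinarith
  refine ⟨fun i _ hi => hkey i hi, ?_⟩
  have h1 : ∑ i, lam i * g i x = 0 := Finset.sum_eq_zero fun i _ => by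
    rcases eq_or_lt_of_le (hlam i) with hz | hp
    · simp [← hz]
    · rw [hkey i hp, mul_zero]
  have h2 : ∑ i, lam i * g i xb = 0 := Finset.sum_eq_zero fun i _ => hcompl i
  rw [h1, h2, hfx]
end
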